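/- arXiv:2208.05653 — 8 statements merged into one kernel-verified Lean document; each statement's English description precedes it below -/
import Mathlib

section
/- Let (A, ∫_A) be an oriented Artinian Gorenstein algebra of socle degree d over ℝ, let ℓ ∈ A_1, and let 0 ≤ i ≤ ⌊d/2⌋. If the pair ((A, ∫_A), ℓ) satisfies the Hodge–Riemann relations HRR_i, then (A, ℓ) satisfies the strong Lefschetz property SL_i; that is, for every 0 ≤ j ≤ i the multiplication map ×ℓ^{d−2j} : A_j → A_{d−j} is bijective. -/
/-- If an oriented Artinian Gorenstein algebra `(A, ∫_A)` of socle degree `d`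
satisfies the Hodge–Riemann relations `HRR_i` with respect to a linear form `ℓ ∈ A₁`, then the
pair `(A, ℓ)` satisfies the strong Lefschetz property `SL_i`: for every `0 ≤ j ≤ i` the
multiplication map `×ℓ^(d−2j) : A_j → A_{d−j}` is bijective. -/
theorem hodgeRiemann_implies_strongLefschetz
    (A : Type) [CommRing A] [Algebra ℝ A]
    (𝒜 : ℕ → Submodule ℝ A) [GradedAlgebra 𝒜]
    (d : ℕ)
    (hfin : ∀ j, FiniteDimensional ℝ (𝒜 j))
    (htrunc : ∀ j, d < j → 𝒜 j = ⊥)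
    (hone : 𝒜 0 = Submodule.span ℝ {(1 : A)})
    (intA : A →ₗ[ℝ] ℝ)
    (hnd : ∀ j, j ≤ d → ∀ α ∈ 𝒜 j, (∀ β ∈ 𝒜 (d - j), intA (α * β) = 0) → α = 0)
    (ℓ : A) (hℓ : ℓ ∈ 𝒜 1)
    (i : ℕ) (hi : i ≤ d / 2)
    -- `HRR_i`: the `j`-th Lefschetz form is positive definite on the `j`-th primitive subspace
    (hHRR : ∀ j, j ≤ i → ∀ α ∈ 𝒜 j, ℓ ^ (d - 2*j + 1) * α = 0 → α ≠ 0 →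
      0 < (-1 : ℝ) ^ j * intA (ℓ ^ (d - 2*j) * α * α)) :
    -- `SL_i`: multiplication `×ℓ^(d−2j) : A_j → A_{d−j}` is bijective for all `j ≤ i`
    ∀ j, j ≤ i →
      (∀ α ∈ 𝒜 j, ℓ ^ (d - 2*j) * α = 0 → α = 0) ∧
      (∀ β ∈ 𝒜 (d - j), ∃ α ∈ 𝒜 j, ℓ ^ (d - 2*j) * α = β) := by
  intro j hj
  haveI := hfin j
  haveI := hfin (d - j)
  have h2j : 2 * j ≤ d := by omega
  have hjd : j ≤ d := by omega
  have hpow : ℓ ^ (d - 2*j) ∈ 𝒜 (d - 2*j) := by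
    simpa using SetLike.pow_mem_graded (d - 2*j) hℓ
  -- injectivity
  have hinj : ∀ α ∈ 𝒜 j, ℓ ^ (d - 2*j) * α = 0 → α = 0 := by
    intro α hα h0
    by_contra hne
    have h1 : ℓ ^ (d - 2*j + 1) * α = 0 := by
      rw [pow_succ]
      calc ℓ ^ (d - 2*j) * ℓ * α = ℓ * (ℓ ^ (d - 2*j) * α) := by ring
        _ = 0 := by rw [h0, mul_zero]
    have hpos := hHRR j hj α hα h1 hne
    rw [h0, zero_mul, map_zero, mul_zero] at hpos
    exact lt_irrefl 0 hpos
  refine ⟨hinj, ?_⟩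
  -- the bilinear pairing A_p × A_q → ℝ
  let B : ∀ p q : ℕ, (𝒜 p) →ₗ[ℝ] Module.Dual ℝ (𝒜 q) := fun p q =>
    LinearMap.mk₂ ℝ (fun (α : 𝒜 p) (β : 𝒜 q) => intA ((α : A) * (β : A)))
      (fun m₁ m₂ n => by simp [add_mul])
      (fun c m n => by simp [smul_mul_assoc])
      (fun m n₁ n₂ => by simp [mul_add])
      (fun c m n => by simp [mul_smul_comm])
  have hBinj : ∀ p, p ≤ d → Function.Injective (B p (d - p)) := by
    intro p hp
    rw [injective_iff_map_eq_zero]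
    intro α hα
    have : (α : A) = 0 := by
      refine hnd p hp α α.2 fun β hβ => ?_
      have := congrFun (congrArg (fun f => f.toFun) hα) ⟨β, hβ⟩
      simpa [B] using this
    exact Subtype.ext this
  have hdual : ∀ p q : ℕ, Function.Injective (B p q) →
      Module.finrank ℝ (𝒜 p) ≤ Module.finrank ℝ (𝒜 q) := by
    intro p q hinj'
    haveI := hfin p
    haveI := hfin q
    calc Module.finrank ℝ (𝒜 p) ≤ Module.finrank ℝ (Module.Dual ℝ (𝒜 q)) :=
          LinearMap.finrank_le_finrank_of_injective hinj'
      _ = Module.finrank ℝ (𝒜 q) := Subspace.dual_finrank_eq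
  have e : d - (d - j) = j := by omega
  have hBinj2 : Function.Injective (B (d - j) j) := by
    have := hBinj (d - j) (by omega)
    rwa [e] at this
  have hrank : Module.finrank ℝ (𝒜 j) = Module.finrank ℝ (𝒜 (d - j)) :=
    le_antisymm (hdual j (d - j) (hBinj j hjd)) (hdual (d - j) j hBinj2)
  -- the multiplication map as a linear map
  let f : (𝒜 j) →ₗ[ℝ] (𝒜 (d - j)) :=
    { toFun := fun x => ⟨ℓ ^ (d - 2*j) * (x : A), by
        have := SetLike.mul_mem_graded hpow x.2
        rwa [show d - 2*j + j = d - j from by omega] at this⟩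
      map_add' := fun x y => by ext; simp [mul_add]
      map_smul' := fun c x => by ext; simp [mul_smul_comm] }
  have hfi : Function.Injective f := by
    rw [injective_iff_map_eq_zero]
    intro x hx
    have : ℓ ^ (d - 2*j) * (x : A) = 0 := congrArg Subtype.val hx
    exact Subtype.ext (hinj x x.2 this)
  have hfs : Function.Surjective f :=
    (LinearMap.injective_iff_surjective_of_finrank_eq_finrank hrank).mp hfi
  intro β hβ
  obtain ⟨x, hx⟩ := hfs ⟨β, hβ⟩
  exact ⟨x, x.2, congrArg Subtype.val hx⟩
end

section
/- Let (A, ∫_A) be an oriented Artinian Gorenstein algebra of socle degree d over ℝ, let ℓ ∈ A_1, and let 0 ≤ i ≤ ⌊d/2⌋. If (A, ℓ) satisfies the strong Lefschetz property SL_i, then for each 0 ≤ j ≤ i one has dim_ℝ P_{j,ℓ} = h_j − h_{j−1}, the degree-j component decomposes as a direct sum A_j = P_{j,ℓ} ⊕ ℓ·A_{j−1}, and this decomposition is orthogonal with respect to the j-th Lefschetz form (α,β)_j^ℓ. -/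
/-- If an oriented Artinian Gorenstein algebra `(A, ∫_A)` of socle degree `d`
satisfies the strong Lefschetz property `SL_i` with respect to `ℓ ∈ A₁`, then for each `j ≤ i`
the primitive subspace `P_{j,ℓ} = ker(×ℓ^(d−2j+1) : A_j → A_{d−j+1})` has dimension
`h_j − h_{j−1}`, `A_j = P_{j,ℓ} ⊕ ℓ·A_{j−1}`, and this decomposition is orthogonal with respect
to the `j`-th Lefschetz form `(α,β) ↦ (−1)^j ∫_A (ℓ^(d−2j)·α·β)`. -/
theorem strongLefschetz_primitive_decomposition
    (A : Type) [CommRing A] [Algebra ℝ A]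
    (𝒜 : ℕ → Submodule ℝ A) [GradedAlgebra 𝒜]
    (d : ℕ)
    (hfin : ∀ j, FiniteDimensional ℝ (𝒜 j))
    (htrunc : ∀ j, d < j → 𝒜 j = ⊥)
    (hone : 𝒜 0 = Submodule.span ℝ {(1 : A)})
    (intA : A →ₗ[ℝ] ℝ)
    (hnd : ∀ j, j ≤ d → ∀ α ∈ 𝒜 j, (∀ β ∈ 𝒜 (d - j), intA (α * β) = 0) → α = 0)
    (ℓ : A) (hℓ : ℓ ∈ 𝒜 1)
    (i : ℕ) (hi : i ≤ d / 2)
    -- `SL_i`: multiplication `×ℓ^(d−2j) : A_j → A_{d−j}` is bijective for all `j ≤ i`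
    (hSL : ∀ j, j ≤ i →
      (∀ α ∈ 𝒜 j, ℓ ^ (d - 2*j) * α = 0 → α = 0) ∧
      (∀ β ∈ 𝒜 (d - j), ∃ α ∈ 𝒜 j, ℓ ^ (d - 2*j) * α = β)) :
    ∀ j, j ≤ i →
      -- the primitive subspace `P_{j,ℓ}` and the submodule `ℓ·A_{j−1}` (zero when `j = 0`)
      (Module.finrank ℝ
          ↥(𝒜 j ⊓ LinearMap.ker (LinearMap.mulLeft ℝ (ℓ ^ (d - 2*j + 1))))
        = Module.finrank ℝ ↥(𝒜 j)
            - (if j = 0 then 0 else Module.finrank ℝ ↥(𝒜 (j - 1)))) ∧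
      (𝒜 j = (𝒜 j ⊓ LinearMap.ker (LinearMap.mulLeft ℝ (ℓ ^ (d - 2*j + 1))))
          ⊔ (if j = 0 then ⊥ else Submodule.map (LinearMap.mulLeft ℝ ℓ) (𝒜 (j - 1)))) ∧
      ((𝒜 j ⊓ LinearMap.ker (LinearMap.mulLeft ℝ (ℓ ^ (d - 2*j + 1))))
          ⊓ (if j = 0 then ⊥ else Submodule.map (LinearMap.mulLeft ℝ ℓ) (𝒜 (j - 1))) = ⊥) ∧
      (∀ α ∈ 𝒜 j ⊓ LinearMap.ker (LinearMap.mulLeft ℝ (ℓ ^ (d - 2*j + 1))),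
        ∀ β ∈ (if j = 0 then (⊥ : Submodule ℝ A)
            else Submodule.map (LinearMap.mulLeft ℝ ℓ) (𝒜 (j - 1))),
          (-1 : ℝ) ^ j * intA (ℓ ^ (d - 2*j) * α * β) = 0) := by
  intro j hj
  have h2j : 2 * j ≤ d := by
    have h1 : d / 2 * 2 ≤ d := Nat.div_mul_le_self d 2
    omega
  by_cases hj0 : j = 0
  · subst hj0
    have hz : ℓ ^ (d - 2*0 + 1) = 0 := by
      have hm := SetLike.pow_mem_graded (d - 2*0 + 1) hℓ
      rw [smul_eq_mul, mul_one] at hm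
      have he : d - 2*0 + 1 = d + 1 := by omega
      rw [he] at hm ⊢
      rw [htrunc (d+1) (by omega)] at hm
      simpa using hm
    rw [hz]
    have hker : LinearMap.ker (LinearMap.mulLeft ℝ (0:A)) = ⊤ := by
      rw [LinearMap.mulLeft_zero_eq_zero, LinearMap.ker_zero]
    rw [hker]
    refine ⟨?_, ?_, ?_, ?_⟩
    · rw [if_pos rfl, inf_top_eq, Nat.sub_zero]
    · rw [if_pos rfl, inf_top_eq, sup_bot_eq]
    · rw [if_pos rfl, inf_bot_eq]
    · intro α hα β hβ
      rw [if_pos rfl, Submodule.mem_bot] at hβ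
      rw [hβ, mul_zero, map_zero, mul_zero]
  · simp only [if_neg hj0]
    have hj1 : 1 ≤ j := Nat.one_le_iff_ne_zero.mpr hj0
    obtain ⟨hinjj, hsurjj⟩ := hSL j hj
    obtain ⟨hinj, hsurj⟩ := hSL (j-1) (le_trans (Nat.sub_le j 1) hj)
    set P := 𝒜 j ⊓ LinearMap.ker (LinearMap.mulLeft ℝ (ℓ ^ (d - 2*j + 1))) with hPdef
    set L := Submodule.map (LinearMap.mulLeft ℝ ℓ) (𝒜 (j-1)) with hLdef
    have hLle : L ≤ 𝒜 j := by
      rintro _ ⟨γ, hγ, rfl⟩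
      have hm := SetLike.mul_mem_graded hℓ hγ
      have he : 1 + (j-1) = j := by omega
      rw [he] at hm
      simpa [LinearMap.mulLeft_apply] using hm
    have hmulinj : ∀ γ ∈ 𝒜 (j-1), ℓ * γ = 0 → γ = 0 := by
      intro γ hγ h0
      apply hinj γ hγ
      have he : d - 2*(j-1) = (d - 2*j + 1) + 1 := by omega
      rw [he, pow_succ, mul_assoc, h0, mul_zero]
    have hinf : P ⊓ L = ⊥ := by
      rw [eq_bot_iff]
      intro x hx
      obtain ⟨hxP, hxL⟩ := Submodule.mem_inf.mp hx
      obtain ⟨hxj, hxk⟩ := Submodule.mem_inf.mp hxP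
      obtain ⟨γ, hγ, rfl⟩ := hxL
      rw [LinearMap.mem_ker, LinearMap.mulLeft_apply] at hxk
      simp only [LinearMap.mulLeft_apply] at hxk ⊢
      have hγ0 : γ = 0 := by
        apply hinj γ hγ
        have he : d - 2*(j-1) = (d - 2*j + 1) + 1 := by omega
        rw [he, pow_succ, mul_assoc]
        exact hxk
      simp [hγ0]
    have hsup : 𝒜 j = P ⊔ L := by
      apply le_antisymm
      · intro α hα
        have hm : ℓ ^ (d - 2*j + 1) * α ∈ 𝒜 (d - (j-1)) := by
          have := SetLike.mul_mem_graded (SetLike.pow_mem_graded (d - 2*j + 1) hℓ) hα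
          rw [smul_eq_mul] at this
          have he : (d - 2*j + 1) * 1 + j = d - (j-1) := by omega
          rwa [he] at this
        obtain ⟨β, hβ, hβeq⟩ := hsurj _ hm
        refine Submodule.mem_sup.mpr ⟨α - ℓ * β, ?_, ℓ * β, ⟨β, hβ, rfl⟩, by ring⟩
        refine Submodule.mem_inf.mpr ⟨Submodule.sub_mem _ hα (hLle ⟨β, hβ, rfl⟩), ?_⟩
        rw [LinearMap.mem_ker, LinearMap.mulLeft_apply]
        have he : d - 2*(j-1) = (d - 2*j + 1) + 1 := by omega
        rw [he, pow_succ] at hβeq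
        rw [mul_sub, ← hβeq]
        ring
      · exact sup_le inf_le_left hLle
    haveI : FiniteDimensional ℝ (𝒜 j) := hfin j
    haveI : FiniteDimensional ℝ (𝒜 (j-1)) := hfin (j-1)
    haveI hPfin : FiniteDimensional ℝ P := Submodule.finiteDimensional_of_le inf_le_left
    haveI hLfin : FiniteDimensional ℝ L := Submodule.finiteDimensional_of_le hLle
    have hdimL : Module.finrank ℝ L = Module.finrank ℝ (𝒜 (j-1)) := by
      have hrange : LinearMap.range ((LinearMap.mulLeft ℝ ℓ).comp (𝒜 (j-1)).subtype) = L := by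
        rw [LinearMap.range_comp, Submodule.range_subtype]
      have hker : LinearMap.ker ((LinearMap.mulLeft ℝ ℓ).comp (𝒜 (j-1)).subtype) = ⊥ := by
        rw [eq_bot_iff]
        intro x hx
        rw [LinearMap.mem_ker, LinearMap.comp_apply, Submodule.subtype_apply,
          LinearMap.mulLeft_apply] at hx
        have hx0 := hmulinj x x.2 hx
        exact (Submodule.mem_bot ℝ).mpr (Subtype.ext hx0)
      have := LinearMap.finrank_range_add_finrank_ker
        ((LinearMap.mulLeft ℝ ℓ).comp (𝒜 (j-1)).subtype)
      rw [hrange, hker, finrank_bot] at this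
      omega
    have hdim : Module.finrank ℝ (𝒜 j) = Module.finrank ℝ P + Module.finrank ℝ L := by
      have h := Submodule.finrank_sup_add_finrank_inf_eq P L
      rw [hinf, ← hsup, finrank_bot] at h
      omega
    refine ⟨by omega, hsup, hinf, ?_⟩
    intro α hα β hβ
    obtain ⟨hαj, hαk⟩ := Submodule.mem_inf.mp hα
    rw [LinearMap.mem_ker, LinearMap.mulLeft_apply] at hαk
    obtain ⟨γ, hγ, rfl⟩ := hβ
    simp only [LinearMap.mulLeft_apply]
    have : ℓ ^ (d - 2*j) * α * (ℓ * γ) = (ℓ ^ (d - 2*j + 1) * α) * γ := by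
      rw [pow_succ]; ring
    rw [this, hαk, zero_mul, map_zero, mul_zero]
end

section
/- Let (A, ∫_A) be an oriented Artinian Gorenstein algebra of socle degree d over ℝ, let U ⊆ A_1, and let 0 ≤ i ≤ ⌊d/2⌋. If (A, ∫_A) satisfies the mixed Hodge–Riemann relations mixed HRR_i on U, then A satisfies the mixed strong Lefschetz property mixed SL_i on U; that is, for every 0 ≤ j ≤ i and every sequence ℓ_1, …, ℓ_{d−2j} of elements of U, the multiplication map ×(ℓ_1⋯ℓ_{d−2j}) : A_j → A_{d−j} is bijective. -/
/-- If an oriented Artinian Gorenstein algebra `(A, ∫_A)` of socle degree `d`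
satisfies the mixed Hodge–Riemann relations `mixed HRR_i` on a subset `U ⊆ A₁`, then `A`
satisfies the mixed strong Lefschetz property `mixed SL_i` on `U`: for every `0 ≤ j ≤ i` and
every sequence `ℓ₁, …, ℓ_{d−2j}` of elements of `U`, the multiplication map
`×(ℓ₁⋯ℓ_{d−2j}) : A_j → A_{d−j}` is bijective. -/
theorem mixedHodgeRiemann_implies_mixedStrongLefschetz
    (A : Type) [CommRing A] [Algebra ℝ A]
    (𝒜 : ℕ → Submodule ℝ A) [GradedAlgebra 𝒜]
    (d : ℕ)
    (hfin : ∀ j, FiniteDimensional ℝ (𝒜 j))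
    (htrunc : ∀ j, d < j → 𝒜 j = ⊥)
    (hone : 𝒜 0 = Submodule.span ℝ {(1 : A)})
    (intA : A →ₗ[ℝ] ℝ)
    (hnd : ∀ j, j ≤ d → ∀ α ∈ 𝒜 j, (∀ β ∈ 𝒜 (d - j), intA (α * β) = 0) → α = 0)
    (U : Set A) (hU : ∀ u ∈ U, u ∈ 𝒜 1)
    (i : ℕ) (hi : i ≤ d / 2)
    -- mixed `HRR_i` on `U`
    (hMHRR : ∀ j, j ≤ i → ∀ ℓ₀ ∈ U, ∀ L : Fin (d - 2*j) → A, (∀ k, L k ∈ U) →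
      ∀ α ∈ 𝒜 j, (ℓ₀ * ∏ k, L k) * α = 0 → α ≠ 0 →
        0 < (-1 : ℝ) ^ j * intA ((∏ k, L k) * α * α)) :
    -- mixed `SL_i` on `U`
    ∀ j, j ≤ i → ∀ L : Fin (d - 2*j) → A, (∀ k, L k ∈ U) →
      (∀ α ∈ 𝒜 j, (∏ k, L k) * α = 0 → α = 0) ∧
      (∀ β ∈ 𝒜 (d - j), ∃ α ∈ 𝒜 j, (∏ k, L k) * α = β) := by
  intro j hj L hLU
  haveI := hfin
  have h2j : 2 * j ≤ d := by omega
  -- injectivity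
  have hinj : ∀ α ∈ 𝒜 j, (∏ k, L k) * α = 0 → α = 0 := by
    intro α hα hLα
    by_contra hne
    rcases Nat.eq_zero_or_pos (d - 2 * j) with h0 | hpos
    · haveI : IsEmpty (Fin (d - 2 * j)) := ⟨fun x => absurd x.2 (by omega)⟩
      rw [Finset.univ_eq_empty, Finset.prod_empty, one_mul] at hLα
      exact hne hLα
    · have hpos' := hMHRR j hj (L ⟨0, hpos⟩) (hLU _) L hLU α hα
        (by rw [mul_assoc, hLα, mul_zero]) hne
      rw [hLα, zero_mul, map_zero, mul_zero] at hpos'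
      exact lt_irrefl 0 hpos'
  refine ⟨hinj, ?_⟩
  -- dimension comparison via Poincaré duality
  have hdim : ∀ a b : ℕ, a + b = d →
      Module.finrank ℝ (𝒜 a) ≤ Module.finrank ℝ (𝒜 b) := by
    intro a b hab
    have hB : Function.Injective
        (LinearMap.mk₂ ℝ (fun (α : 𝒜 a) (β : 𝒜 b) => intA ((α : A) * (β : A)))
          (by intro x y z; simp [add_mul])
          (by intro c x y; simp [Submodule.coe_smul, smul_mul_assoc])
          (by intro x y z; simp [mul_add])
          (by intro c x y; simp [Submodule.coe_smul, mul_smul_comm])) := by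
      intro α β hαβ
      have h := sub_eq_zero.mpr hαβ
      rw [← map_sub] at h
      have h2 : ∀ γ ∈ 𝒜 (d - a), intA ((((α : A) - β)) * γ) = 0 := by
        intro γ hγ
        have hγb : γ ∈ 𝒜 b := by
          have : d - a = b := by omega
          rwa [this] at hγ
        have := congrFun (congrArg (fun f => f.toFun) h) ⟨γ, hγb⟩
        simpa [sub_mul] using this
      have := hnd a (by omega) ((α : A) - (β : A)) (sub_mem α.2 β.2) h2
      exact Subtype.ext (sub_eq_zero.mp this)
    calc Module.finrank ℝ (𝒜 a) ≤ Module.finrank ℝ (Module.Dual ℝ (𝒜 b)) :=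
          LinearMap.finrank_le_finrank_of_injective hB
      _ = Module.finrank ℝ (𝒜 b) := Subspace.dual_finrank_eq
  have hdimeq : Module.finrank ℝ (𝒜 j) = Module.finrank ℝ (𝒜 (d - j)) :=
    le_antisymm (hdim j (d - j) (by omega)) (hdim (d - j) j (by omega))
  -- the multiplication map lands in 𝒜 (d - j)
  have hLmem : (∏ k, L k) ∈ 𝒜 (d - 2 * j) := by
    have := SetLike.prod_mem_graded 𝒜 (fun _ : Fin (d - 2 * j) => 1) L
      (F := Finset.univ) (fun k _ => hU _ (hLU k))
    simpa using this
  have hidx : d - 2 * j + j = d - j := by omega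
  let f : 𝒜 j →ₗ[ℝ] 𝒜 (d - j) :=
    { toFun := fun α => ⟨(∏ k, L k) * α, hidx ▸ SetLike.mul_mem_graded hLmem α.2⟩
      map_add' := by intro x y; ext; simp [mul_add]
      map_smul' := by intro c x; ext; simp [mul_smul_comm] }
  have hfinj : Function.Injective f := by
    intro x y hxy
    have : (∏ k, L k) * ((x : A) - y) = 0 := by
      have := congrArg (fun z : 𝒜 (d - j) => (z : A)) hxy
      simp only [f, LinearMap.coe_mk, AddHom.coe_mk] at this
      rw [mul_sub, this, sub_self]
    exact Subtype.ext (sub_eq_zero.mp (hinj _ (sub_mem x.2 y.2) this))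
  have hrange : LinearMap.range f = ⊤ := by
    apply Submodule.eq_top_of_finrank_eq
    rw [LinearMap.finrank_range_of_inj hfinj, hdimeq]
  intro β hβ
  obtain ⟨α, hα⟩ := LinearMap.range_eq_top.mp hrange ⟨β, hβ⟩
  exact ⟨α, α.2, congrArg Subtype.val hα⟩
end

section
/- Let (A, ∫_A) be an oriented Artinian Gorenstein algebra of socle degree d over ℝ, let U ⊆ A_1, and let 0 ≤ i ≤ ⌊d/2⌋. If A satisfies the mixed strong Lefschetz property mixed SL_i on U, then for each 0 ≤ j ≤ i and each choice of ℓ_0, ℓ_1, …, ℓ_{d−2j} ∈ U with ℒ = (ℓ_1, …, ℓ_{d−2j}), one has dim_ℝ P_{j,ℓ_0}^ℒ = h_j − h_{j−1} and A_j = P_{j,ℓ_0}^ℒ ⊕ ℓ_0·A_{j−1}, and this decomposition is orthogonal with respect to the j-th mixed Lefschetz form (α,β)_j^ℒ. -/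
/-- If an oriented Artinian Gorenstein algebra `(A, ∫_A)` of socle degree `d`
satisfies the mixed strong Lefschetz property `mixed SL_i` on a subset `U ⊆ A₁`, then for each
`0 ≤ j ≤ i` and each choice of `ℓ₀, ℓ₁, …, ℓ_{d−2j} ∈ U` with `ℒ = (ℓ₁, …, ℓ_{d−2j})`, the
mixed primitive subspace `P_{j,ℓ₀}^ℒ = ker(×(ℓ₀ℓ₁⋯ℓ_{d−2j}) : A_j → A_{d−j+1})` has dimension
`h_j − h_{j−1}`, `A_j = P_{j,ℓ₀}^ℒ ⊕ ℓ₀·A_{j−1}`, and this decomposition is orthogonal with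
respect to the `j`-th mixed Lefschetz form `(α,β) ↦ (−1)^j ∫_A (ℓ₁⋯ℓ_{d−2j}·α·β)`. -/
theorem mixedStrongLefschetz_primitive_decomposition
    (A : Type) [CommRing A] [Algebra ℝ A]
    (𝒜 : ℕ → Submodule ℝ A) [GradedAlgebra 𝒜]
    (d : ℕ)
    (hfin : ∀ j, FiniteDimensional ℝ (𝒜 j))
    (htrunc : ∀ j, d < j → 𝒜 j = ⊥)
    (hone : 𝒜 0 = Submodule.span ℝ {(1 : A)})
    (intA : A →ₗ[ℝ] ℝ)
    (hnd : ∀ j, j ≤ d → ∀ α ∈ 𝒜 j, (∀ β ∈ 𝒜 (d - j), intA (α * β) = 0) → α = 0)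
    (U : Set A) (hU : ∀ u ∈ U, u ∈ 𝒜 1)
    (i : ℕ) (hi : i ≤ d / 2)
    -- mixed `SL_i` on `U`
    (hMSL : ∀ j, j ≤ i → ∀ L : Fin (d - 2*j) → A, (∀ k, L k ∈ U) →
      (∀ α ∈ 𝒜 j, (∏ k, L k) * α = 0 → α = 0) ∧
      (∀ β ∈ 𝒜 (d - j), ∃ α ∈ 𝒜 j, (∏ k, L k) * α = β)) :
    ∀ j, j ≤ i → ∀ ℓ₀ ∈ U, ∀ L : Fin (d - 2*j) → A, (∀ k, L k ∈ U) →
      (Module.finrank ℝ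
          ↥(𝒜 j ⊓ LinearMap.ker (LinearMap.mulLeft ℝ (ℓ₀ * ∏ k, L k)))
        = Module.finrank ℝ ↥(𝒜 j)
            - (if j = 0 then 0 else Module.finrank ℝ ↥(𝒜 (j - 1)))) ∧
      (𝒜 j = (𝒜 j ⊓ LinearMap.ker (LinearMap.mulLeft ℝ (ℓ₀ * ∏ k, L k)))
          ⊔ (if j = 0 then ⊥ else Submodule.map (LinearMap.mulLeft ℝ ℓ₀) (𝒜 (j - 1)))) ∧
      ((𝒜 j ⊓ LinearMap.ker (LinearMap.mulLeft ℝ (ℓ₀ * ∏ k, L k)))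
          ⊓ (if j = 0 then ⊥ else Submodule.map (LinearMap.mulLeft ℝ ℓ₀) (𝒜 (j - 1))) = ⊥) ∧
      (∀ α ∈ 𝒜 j ⊓ LinearMap.ker (LinearMap.mulLeft ℝ (ℓ₀ * ∏ k, L k)),
        ∀ β ∈ (if j = 0 then (⊥ : Submodule ℝ A)
            else Submodule.map (LinearMap.mulLeft ℝ ℓ₀) (𝒜 (j - 1))),
          (-1 : ℝ) ^ j * intA ((∏ k, L k) * α * β) = 0) := by
  have hcast : ∀ {a b : ℕ}, a = b → ∀ {x : A}, x ∈ 𝒜 a → x ∈ 𝒜 b := by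
    rintro a b rfl x hx; exact hx
  have hprodmem : ∀ (n : ℕ) (f : Fin n → A), (∀ k, f k ∈ 𝒜 1) → (∏ k, f k) ∈ 𝒜 n := by
    intro n f hf
    have := SetLike.prod_mem_graded 𝒜 (fun _ : Fin n => (1 : ℕ)) f
      (F := Finset.univ) (fun k _ => hf k)
    simpa using this
  intro j hj ℓ₀ hℓ₀ L hL
  have hℓmem : ℓ₀ ∈ 𝒜 1 := hU ℓ₀ hℓ₀
  have hPmem : (∏ k, L k) ∈ 𝒜 (d - 2*j) := hprodmem _ L (fun k => hU _ (hL k))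
  have h2j : 2*j ≤ d := by omega
  rcases Nat.eq_zero_or_pos j with rfl | hjpos
  · -- j = 0 case
    have hq : ℓ₀ * ∏ k, L k = 0 := by
      have hm : ℓ₀ * ∏ k, L k ∈ 𝒜 (1 + (d - 2*0)) :=
        SetLike.mul_mem_graded hℓmem hPmem
      have : 𝒜 (1 + (d - 2*0)) = ⊥ := htrunc _ (by omega)
      rw [this] at hm; simpa using hm
    rw [hq]
    have hker : LinearMap.ker (LinearMap.mulLeft ℝ (0:A)) = ⊤ := by
      ext x; simp [LinearMap.mem_ker]
    rw [hker, inf_top_eq]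
    simp only [reduceIte]
    refine ⟨by simp, by simp, by simp, ?_⟩
    intro α _ β hβ
    rw [Submodule.mem_bot] at hβ
    simp [hβ]
  · -- j ≥ 1
    obtain ⟨j', rfl⟩ : ∃ j', j = j' + 1 := ⟨j - 1, by omega⟩
    have hne : ¬ (j' + 1 = 0) := (Nat.succ_ne_zero j')
    simp only [if_neg hne, Nat.add_sub_cancel]
    set P : A := ∏ k, L k with hPdef
    set q : A := ℓ₀ * P with hqdef
    -- the longer sequence
    have e : d - 2*j' = (d - 2*(j'+1)) + 2 := by omega
    set L₂ : Fin ((d - 2*(j'+1)) + 2) → A := Fin.cons ℓ₀ (Fin.cons ℓ₀ L) with hL₂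
    set L' : Fin (d - 2*j') → A := fun k => L₂ (Fin.cast e k) with hL'def
    have hL'U : ∀ k, L' k ∈ U := by
      intro k
      show L₂ (Fin.cast e k) ∈ U
      refine Fin.cases ?_ (fun m => ?_) (Fin.cast e k)
      · simpa [hL₂] using hℓ₀
      · refine Fin.cases ?_ (fun m' => ?_) m
        · simpa [hL₂] using hℓ₀
        · simpa [hL₂] using hL m'
    have hprod : (∏ k, L' k) = ℓ₀ * (ℓ₀ * P) := by
      rw [hL'def]
      rw [Fin.prod_congr' L₂ e]
      simp [hL₂, Fin.prod_cons]
      rfl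
    obtain ⟨hinj, hsurj⟩ := hMSL j' (by omega) L' hL'U
    rw [hprod] at hinj hsurj
    -- injectivity of ×ℓ₀ on 𝒜 j'
    have hℓinj : ∀ γ ∈ 𝒜 j', ℓ₀ * γ = 0 → γ = 0 := by
      intro γ hγ h0
      exact hinj γ hγ (by linear_combination (ℓ₀ * P) * h0)
    set K : Submodule ℝ A := 𝒜 (j'+1) ⊓ LinearMap.ker (LinearMap.mulLeft ℝ q) with hK
    set M : Submodule ℝ A := Submodule.map (LinearMap.mulLeft ℝ ℓ₀) (𝒜 j') with hM
    have hMle : M ≤ 𝒜 (j'+1) := by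
      rintro x ⟨γ, hγ, rfl⟩
      exact hcast (by omega) (SetLike.mul_mem_graded hℓmem hγ)
    have hdisj : K ⊓ M = ⊥ := by
      rw [eq_bot_iff]
      rintro x ⟨⟨hxj, hxker⟩, γ, hγ, rfl⟩
      have h0 : q * (ℓ₀ * γ) = 0 := hxker
      have : γ = 0 := hinj γ hγ (by rw [hqdef] at h0; linear_combination h0)
      simp [this]
    have hsup : 𝒜 (j'+1) = K ⊔ M := by
      refine le_antisymm ?_ (sup_le inf_le_left hMle)
      intro α hα
      have hβ : q * α ∈ 𝒜 (d - j') := by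
        have : q * α ∈ 𝒜 ((1 + (d - 2*(j'+1))) + (j'+1)) :=
          SetLike.mul_mem_graded (SetLike.mul_mem_graded hℓmem hPmem) hα
        exact hcast (by omega) this
      obtain ⟨γ, hγ, hγeq⟩ := hsurj (q * α) hβ
      have hα₁K : α - ℓ₀ * γ ∈ K := by
        constructor
        · exact sub_mem hα (hcast (by omega) (SetLike.mul_mem_graded hℓmem hγ))
        · show q * (α - ℓ₀ * γ) = 0
          rw [hqdef] at hγeq ⊢
          linear_combination -hγeq
      have : α = (α - ℓ₀ * γ) + ℓ₀ * γ := by ring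
      rw [this]
      exact Submodule.add_mem_sup hα₁K ⟨γ, hγ, rfl⟩
    have := hfin j'
    have := hfin (j'+1)
    have : FiniteDimensional ℝ K := Submodule.finiteDimensional_of_le (inf_le_left : K ≤ 𝒜 (j'+1))
    have : FiniteDimensional ℝ M := Submodule.finiteDimensional_of_le hMle
    have hMrank : Module.finrank ℝ M = Module.finrank ℝ (𝒜 j') := by
      set f : 𝒜 j' →ₗ[ℝ] A := (LinearMap.mulLeft ℝ ℓ₀) ∘ₗ (𝒜 j').subtype with hf
      have hrange : LinearMap.range f = M := by
        rw [hf, LinearMap.range_comp, Submodule.range_subtype]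
      have hker : LinearMap.ker f = ⊥ := by
        rw [eq_bot_iff]
        intro γ hγ
        have : ℓ₀ * (γ : A) = 0 := hγ
        have := hℓinj γ γ.2 this
        simpa [Submodule.mem_bot] using Subtype.ext this
      have := LinearMap.finrank_range_add_finrank_ker f
      rw [hrange, hker] at this
      simpa using this
    have hrank := Submodule.finrank_sup_add_finrank_inf_eq K M
    rw [← hsup, hdisj, hMrank] at hrank
    simp only [finrank_bot, add_zero] at hrank
    have hj1 : Module.finrank ℝ (𝒜 (j' + 1 - 1)) = Module.finrank ℝ (𝒜 j') := rfl
    refine ⟨by rw [hj1]; omega, hsup, hdisj, ?_⟩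
    rintro α ⟨hαj, hαker⟩ β ⟨γ, hγ, rfl⟩
    have h0 : q * α = 0 := hαker
    have : P * α * ((LinearMap.mulLeft ℝ ℓ₀) γ) = (q * α) * γ := by
      simp only [LinearMap.mulLeft_apply, hqdef]; ring
    rw [this, h0, zero_mul, map_zero, mul_zero]
end

section
/- Let d ≥ 0, let 0 ≤ i ≤ ⌊d/2⌋, let c_0, …, c_d ∈ ℝ (extended by c_k = 0 for k < 0 or k > d), and let F = Σ_{k=0}^d binom(d,k)·c_k·X^k·Y^{d−k} ∈ ℝ[X,Y]. Then the rank of the (i+1) × (d−i+1) Toeplitz matrix φ^i_d(c) with (p,q) entry c_{i+q−p} (0 ≤ p ≤ i, 0 ≤ q ≤ d−i) equals the dimension of the ℝ-linear span of the partial derivatives {∂^i F/∂X^p ∂Y^{i−p} : 0 ≤ p ≤ i} inside ℝ[X,Y]. -/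
open MvPolynomial Finset

private lemma iter_pd (j : Fin 2) (p k : ℕ) :
    (((pderiv j).toLinearMap : Module.End ℝ (MvPolynomial (Fin 2) ℝ)) ^ p)
      (X j ^ k) = C (k.descFactorial p : ℝ) * X j ^ (k - p) := by
  induction p generalizing k with
  | zero => simp
  | succ p ih =>
    rw [pow_succ, Module.End.mul_apply]
    simp only [Derivation.coeFn_coe]
    rw [pderiv_pow, pderiv_X_self, mul_one]
    cases k with
    | zero => simp
    | succ k =>
      have : ((k + 1 : ℕ) : MvPolynomial (Fin 2) ℝ) * X j ^ (k + 1 - 1)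
          = C ((k+1 : ℕ) : ℝ) * X j ^ k := by
        simp
      rw [this, ← smul_eq_C_mul, map_smul, ih, smul_eq_C_mul,
        Nat.succ_descFactorial_succ, Nat.succ_sub_succ, ← mul_assoc, ← C_mul]
      push_cast
      ring_nf

private lemma iter_pd_mul (j : Fin 2) (n : ℕ) (g h : MvPolynomial (Fin 2) ℝ)
    (hg : pderiv j g = 0) :
    (((pderiv j).toLinearMap : Module.End ℝ (MvPolynomial (Fin 2) ℝ)) ^ n) (g * h)
      = g * (((pderiv j).toLinearMap : Module.End ℝ (MvPolynomial (Fin 2) ℝ)) ^ n) h := by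
  induction n generalizing h with
  | zero => simp
  | succ n ih =>
    rw [pow_succ', Module.End.mul_apply, Module.End.mul_apply]
    simp only [Derivation.coeFn_coe]
    rw [ih h, pderiv_mul, hg, zero_mul, zero_add]

private lemma term_deriv (p r kx ky : ℕ) (a : ℝ) :
    (((pderiv (0 : Fin 2)).toLinearMap ^ p *
        (pderiv (1 : Fin 2)).toLinearMap ^ r :
      Module.End ℝ (MvPolynomial (Fin 2) ℝ)))
      (C a * X 0 ^ kx * X 1 ^ ky)
    = C (a * kx.descFactorial p * ky.descFactorial r) * X 0 ^ (kx - p) * X 1 ^ (ky - r) := by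
  rw [Module.End.mul_apply]
  rw [mul_assoc, ← mul_assoc (C a)]
  rw [iter_pd_mul 1 r (C a * X 0 ^ kx) _ (by
    rw [pderiv_C_mul, pderiv_pow, pderiv_X_of_ne (by decide)]
    simp)]
  rw [iter_pd 1 r ky]
  have : (C a * X 0 ^ kx * (C (ky.descFactorial r : ℝ) * X 1 ^ (ky - r))
        : MvPolynomial (Fin 2) ℝ)
      = (C a * C (ky.descFactorial r : ℝ) * X 1 ^ (ky - r)) * X 0 ^ kx := by ring
  rw [this]
  rw [iter_pd_mul 0 p _ _ (by
    rw [pderiv_mul, pderiv_C_mul, pderiv_C, pderiv_pow, pderiv_X_of_ne (by decide)]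
    simp)]
  rw [iter_pd 0 p kx, C_mul, C_mul]
  ring

private lemma nat_identity (d i p q : ℕ) (hp : p ≤ i) (hid : i ≤ d) (hq : q ≤ d - i) :
    d.choose (q + p) * ((q + p).descFactorial p * (d - (q + p)).descFactorial (i - p))
      = d.choose i * i.factorial * (d - i).choose q := by
  have h1 : (q + p).descFactorial p * q.factorial = (q + p).factorial := by
    have := Nat.factorial_mul_descFactorial (Nat.le_add_left p q)
    simpa [Nat.add_sub_cancel, mul_comm] using this
  have h2 : (d - (q + p)).descFactorial (i - p) * (d - i - q).factorial
      = (d - (q + p)).factorial := by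
    have hle : i - p ≤ d - (q + p) := by omega
    have := Nat.factorial_mul_descFactorial hle
    have heq : d - (q + p) - (i - p) = d - i - q := by omega
    rw [heq] at this
    simpa [mul_comm] using this
  have h3 : d.choose (q + p) * (q + p).factorial * (d - (q + p)).factorial
      = d.factorial := Nat.choose_mul_factorial_mul_factorial (by omega)
  have h4 : d.choose i * i.factorial * (d - i).factorial = d.factorial :=
    Nat.choose_mul_factorial_mul_factorial hid
  have h5 : (d - i).choose q * q.factorial * (d - i - q).factorial = (d - i).factorial :=
    Nat.choose_mul_factorial_mul_factorial hq
  have hK : 0 < q.factorial * (d - i - q).factorial :=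
    Nat.mul_pos (Nat.factorial_pos _) (Nat.factorial_pos _)
  apply Nat.eq_of_mul_eq_mul_right hK
  calc d.choose (q + p) * ((q + p).descFactorial p * (d - (q + p)).descFactorial (i - p))
        * (q.factorial * (d - i - q).factorial)
      = d.choose (q + p) * (((q + p).descFactorial p * q.factorial)
          * ((d - (q + p)).descFactorial (i - p) * (d - i - q).factorial)) := by ring
    _ = d.choose (q + p) * ((q + p).factorial * (d - (q + p)).factorial) := by rw [h1, h2]
    _ = d.factorial := by rw [← mul_assoc]; exact h3
    _ = d.choose i * i.factorial * (d - i).factorial := h4.symm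
    _ = d.choose i * i.factorial * ((d - i).choose q * q.factorial * (d - i - q).factorial) := by
        rw [h5]
    _ = d.choose i * i.factorial * (d - i).choose q * (q.factorial * (d - i - q).factorial) := by
        ring


private noncomputable def wpoly (d i q : ℕ) : MvPolynomial (Fin 2) ℝ :=
  C ((d.choose i * i.factorial * (d - i).choose q : ℕ) : ℝ) * X 0 ^ q * X 1 ^ (d - i - q)

private lemma wpoly_eq (d i q : ℕ) :
    wpoly d i q = monomial (Finsupp.single 0 q + Finsupp.single 1 (d - i - q))
      ((d.choose i * i.factorial * (d - i).choose q : ℕ) : ℝ) := by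
  unfold wpoly
  rw [X_pow_eq_monomial, X_pow_eq_monomial, mul_assoc, monomial_mul, C_mul_monomial]
  simp

private lemma deriv_row (d i p : ℕ) (hp : p ≤ i) (hid : 2 * i ≤ d) (c : ℕ → ℝ) :
    (((pderiv (0 : Fin 2)).toLinearMap ^ p *
        (pderiv (1 : Fin 2)).toLinearMap ^ (i - p) :
      Module.End ℝ (MvPolynomial (Fin 2) ℝ)))
      (∑ k ∈ Finset.range (d + 1),
        MvPolynomial.C ((d.choose k : ℝ) * c k) *
          MvPolynomial.X 0 ^ k * MvPolynomial.X 1 ^ (d - k))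
    = ∑ q ∈ Finset.range (d - i + 1), C (c (q + p)) * wpoly d i q := by
  rw [map_sum]
  have step : ∀ k ∈ Finset.range (d + 1),
      (((pderiv (0 : Fin 2)).toLinearMap ^ p *
          (pderiv (1 : Fin 2)).toLinearMap ^ (i - p) :
        Module.End ℝ (MvPolynomial (Fin 2) ℝ)))
        (C ((d.choose k : ℝ) * c k) * X 0 ^ k * X 1 ^ (d - k))
      = if p ≤ k ∧ k ≤ d - i + p then C (c k) * wpoly d i (k - p) else 0 := by
    intro k hk
    rw [Finset.mem_range] at hk
    rw [term_deriv]
    split_ifs with h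
    · obtain ⟨q, rfl⟩ := Nat.exists_eq_add_of_le h.1
      have e1 : p + q - p = q := by omega
      have e2 : d - (p + q) - (i - p) = d - i - q := by omega
      have hnat := nat_identity d i p q hp (by omega) (by omega)
      rw [add_comm q p] at hnat
      have hreal : ((d.choose (p + q) : ℝ)) * ((p + q).descFactorial p : ℝ)
          * (((d - (p + q)).descFactorial (i - p)) : ℝ)
          = ((d.choose i * i.factorial * (d - i).choose q : ℕ) : ℝ) := by
        rw [← hnat]; push_cast; ring
      rw [e1, e2]
      unfold wpoly
      rw [show ((d.choose (p + q) : ℝ) * c (p + q) * ((p + q).descFactorial p : ℝ)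
          * (((d - (p + q)).descFactorial (i - p)) : ℝ))
          = c (p + q) * ((d.choose i * i.factorial * (d - i).choose q : ℕ) : ℝ) from by
        rw [← hreal]; ring]
      rw [C_mul]
      ring
    · have hz : ((k.descFactorial p : ℝ)) * (((d - k).descFactorial (i - p)) : ℝ) = 0 := by
        rcases not_and_or.mp h with h1 | h2
        · have : k.descFactorial p = 0 := Nat.descFactorial_eq_zero_iff_lt.mpr (by omega)
          rw [this]; simp
        · have : (d - k).descFactorial (i - p) = 0 :=
            Nat.descFactorial_eq_zero_iff_lt.mpr (by omega)
          rw [this]; simp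
      rw [show ((d.choose k : ℝ) * c k * ((k.descFactorial p) : ℝ)
          * (((d - k).descFactorial (i - p)) : ℝ)) = 0 from by
        rw [mul_assoc, hz]; ring]
      simp
  rw [Finset.sum_congr rfl step, ← Finset.sum_filter]
  have hfe : (Finset.range (d + 1)).filter (fun k => p ≤ k ∧ k ≤ d - i + p)
      = Finset.Ico p (d - i + p + 1) := by
    ext k; simp only [Finset.mem_filter, Finset.mem_range, Finset.mem_Ico]; omega
  rw [hfe, Finset.sum_Ico_eq_sum_range,
    show d - i + p + 1 - p = d - i + 1 from by omega]
  refine Finset.sum_congr rfl fun q _ => ?_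
  rw [show p + q - p = q from by omega, add_comm p q]

private noncomputable def fmap (d i : ℕ) :
    (Fin (d - i + 1) → ℝ) →ₗ[ℝ] MvPolynomial (Fin 2) ℝ :=
  Fintype.linearCombination ℝ (fun q : Fin (d - i + 1) => wpoly d i q.val)

private lemma fmap_inj (d i : ℕ) (hid : i ≤ d) : Function.Injective (fmap d i) := by
  refine (injective_iff_map_eq_zero (fmap d i)).mpr fun e he => ?_
  funext q₀
  have hco := congrArg (MvPolynomial.coeff
    (Finsupp.single (0 : Fin 2) q₀.val + Finsupp.single 1 (d - i - q₀.val))) he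
  rw [fmap, Fintype.linearCombination_apply] at hco
  simp only [wpoly_eq, MvPolynomial.coeff_zero, smul_eq_C_mul] at hco
  rw [MvPolynomial.coeff_sum] at hco
  simp only [coeff_C_mul, coeff_monomial] at hco
  have hcond : ∀ q : Fin (d - i + 1),
      (Finsupp.single (0 : Fin 2) q.val + Finsupp.single 1 (d - i - q.val)
        = Finsupp.single (0 : Fin 2) q₀.val + Finsupp.single 1 (d - i - q₀.val))
      ↔ q = q₀ := by
    intro q
    constructor
    · intro h
      have := DFunLike.congr_fun h (0 : Fin 2)
      simp [Finsupp.single_apply, show (1 : Fin 2) ≠ 0 from by decide] at this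
      exact Fin.ext this
    · rintro rfl; rfl
  rw [Finset.sum_congr rfl fun q _ => by rw [if_congr (hcond q) rfl rfl]] at hco
  simp only [mul_ite, mul_zero] at hco
  rw [Finset.sum_ite_eq' Finset.univ q₀] at hco
  simp only [Finset.mem_univ, if_true] at hco
  have hD : ((d.choose i * i.factorial * (d - i).choose q₀.val : ℕ) : ℝ) ≠ 0 := by
    have h1 : 0 < d.choose i := Nat.choose_pos hid
    have h2 : 0 < (d - i).choose q₀.val := Nat.choose_pos (by omega)
    positivity
  exact mul_left_cancel₀ hD (by rw [mul_comm] at hco; simpa using hco)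

open MvPolynomial in
/-- For `F = Σ_{k=0}^d binom(d,k)·c_k·X^k·Y^(d−k) ∈ ℝ[X,Y]` and
`0 ≤ i ≤ ⌊d/2⌋`, the rank of the `(i+1) × (d−i+1)` Toeplitz matrix `φ^i_d(c)` with `(p,q)`
entry `c_{i+q−p}` equals the dimension of the span of the `i`-th order partial derivatives
`{∂^i F/∂X^p ∂Y^(i−p) : 0 ≤ p ≤ i}` in `ℝ[X,Y]`. -/
theorem toeplitz_rank_eq_span_partials
    (d i : ℕ) (hi : i ≤ d / 2) (c : ℕ → ℝ) (hc : ∀ k, d < k → c k = 0) :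
    (Matrix.of fun (p : Fin (i + 1)) (q : Fin (d - i + 1)) =>
        c (i + q.val - p.val)).rank
      = Module.finrank ℝ (Submodule.span ℝ (Set.range fun p : Fin (i + 1) =>
          (((pderiv (0 : Fin 2)).toLinearMap ^ p.val *
              (pderiv (1 : Fin 2)).toLinearMap ^ (i - p.val) :
            Module.End ℝ (MvPolynomial (Fin 2) ℝ))
            (∑ k ∈ Finset.range (d + 1),
              MvPolynomial.C ((d.choose k : ℝ) * c k) *
                MvPolynomial.X 0 ^ k * MvPolynomial.X 1 ^ (d - k))))) := by
  have h2d : 2 * i ≤ d := by omega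
  set A : Matrix (Fin (i + 1)) (Fin (d - i + 1)) ℝ :=
    Matrix.of fun (p : Fin (i + 1)) (q : Fin (d - i + 1)) => c (i + q.val - p.val) with hA
  set v : Fin (i + 1) → MvPolynomial (Fin 2) ℝ := fun p : Fin (i + 1) =>
    (((pderiv (0 : Fin 2)).toLinearMap ^ p.val *
        (pderiv (1 : Fin 2)).toLinearMap ^ (i - p.val) :
      Module.End ℝ (MvPolynomial (Fin 2) ℝ))
      (∑ k ∈ Finset.range (d + 1),
        MvPolynomial.C ((d.choose k : ℝ) * c k) *
          MvPolynomial.X 0 ^ k * MvPolynomial.X 1 ^ (d - k))) with hv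
  rw [← Matrix.rank_transpose, Matrix.rank_eq_finrank_span_cols, Matrix.col_transpose]
  change Module.finrank ℝ (Submodule.span ℝ (Set.range A)) = _
  have key : ∀ p : Fin (i + 1), fmap d i (A p) = v ⟨i - p.val, by omega⟩ := by
    intro p
    have hvp : v ⟨i - p.val, by omega⟩
        = ∑ q ∈ Finset.range (d - i + 1), C (c (q + (i - p.val))) * wpoly d i q := by
      rw [hv]
      exact deriv_row d i (i - p.val) (by omega) h2d c
    rw [hvp, fmap, Fintype.linearCombination_apply]
    simp only [hA, Matrix.of_apply]
    rw [Fin.sum_univ_eq_sum_range (fun q => c (i + q - p.val) • wpoly d i q)]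
    refine Finset.sum_congr rfl fun q _ => ?_
    rw [smul_eq_C_mul, show i + q - p.val = q + (i - p.val) from by omega]
  have hsurj : Function.Surjective
      (fun p : Fin (i + 1) => (⟨i - p.val, by omega⟩ : Fin (i + 1))) := by
    intro p
    refine ⟨⟨i - p.val, by omega⟩, ?_⟩
    ext
    simp only []
    omega
  have hrange : Set.range v = fmap d i '' Set.range A := by
    erw [← Set.range_comp]
    have hfun : (fmap d i ∘ A) = v ∘ (fun p : Fin (i + 1) => (⟨i - p.val, by omega⟩ : Fin (i + 1))) := by
      funext p
      exact key p
    rw [hfun, Set.range_comp, hsurj.range_eq, Set.image_univ]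
  rw [hrange, ← Submodule.map_span]
  exact LinearEquiv.finrank_eq
    (Submodule.equivMapOfInjective (fmap d i) (fmap_inj d i (by omega))
      (Submodule.span ℝ (Set.range A)))
end

section
/- Let d ≥ 0 and 0 ≤ i ≤ ⌊d/2⌋, and let c = (c_0, …, c_d) ∈ ℝ^{d+1}, extended by c_k = 0 for k < 0 or k > d. Then the (i+1) × (d−i+1) Toeplitz matrix φ^i_d(c) with (p,q) entry c_{i+q−p} is totally positive if and only if c is strictly i-Lorentzian, i.e., if and only if for every 0 ≤ j ≤ i and every 0 ≤ m ≤ d−2j the (j+1) × (j+1) Toeplitz determinant det((c_{m+j+q−p})_{0 ≤ p,q ≤ j}) is positive. -/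
open Matrix

set_option maxRecDepth 4000

namespace TPAux

set_option maxRecDepth 4000

variable {r : ℕ}

/-- Bracket: determinant of the square matrix with rows `x`, `S 0, …, S (r-1)`, `y`. -/
noncomputable def Dbr (S : Fin r → (Fin (r+2) → ℝ)) (x y : Fin (r+2) → ℝ) : ℝ :=
  (Matrix.of (Fin.cons x (Fin.snoc S y))).det

lemma of_cons_snoc_eq_updateRow_last (S : Fin r → (Fin (r+2) → ℝ)) (x y : Fin (r+2) → ℝ) :
    Matrix.of (Fin.cons x (Fin.snoc S y)) =
      (Matrix.of (Fin.cons x (Fin.snoc S 0))).updateRow (Fin.last (r+1)) y := by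
  apply Matrix.ext; intro i j
  rcases eq_or_ne i (Fin.last (r+1)) with rfl | hi
  · rw [Matrix.updateRow_self, Matrix.of_apply, ← Fin.succ_last, Fin.cons_succ, Fin.snoc_last]
  · rw [Matrix.updateRow_ne hi]
    induction i using Fin.cases with
    | zero => rw [Matrix.of_apply, Matrix.of_apply, Fin.cons_zero, Fin.cons_zero]
    | succ j' =>
      induction j' using Fin.lastCases with
      | last => exact absurd (Fin.succ_last r ▸ rfl) hi
      | cast j'' =>
        rw [Matrix.of_apply, Matrix.of_apply, Fin.cons_succ, Fin.cons_succ,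
          Fin.snoc_castSucc, Fin.snoc_castSucc]

lemma of_cons_eq_updateRow_zero (T : Fin (r+1) → (Fin (r+2) → ℝ)) (x : Fin (r+2) → ℝ) :
    Matrix.of (Fin.cons x T) = (Matrix.of (Fin.cons 0 T)).updateRow 0 x := by
  apply Matrix.ext; intro i j
  induction i using Fin.cases with
  | zero => rw [Matrix.updateRow_self, Matrix.of_apply, Fin.cons_zero]
  | succ j' =>
    rw [Matrix.updateRow_ne (Fin.succ_ne_zero j'), Matrix.of_apply, Matrix.of_apply,
      Fin.cons_succ, Fin.cons_succ]

/-- `Dbr S x` as a linear map in the last row. -/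
noncomputable def DbrR (S : Fin r → (Fin (r+2) → ℝ)) (x : Fin (r+2) → ℝ) :
    (Fin (r+2) → ℝ) →ₗ[ℝ] ℝ where
  toFun y := Dbr S x y
  map_add' y z := by
    unfold Dbr
    rw [of_cons_snoc_eq_updateRow_last S x (y + z), of_cons_snoc_eq_updateRow_last S x y,
      of_cons_snoc_eq_updateRow_last S x z]
    exact Matrix.det_updateRow_add _ _ _ _
  map_smul' a y := by
    unfold Dbr
    rw [of_cons_snoc_eq_updateRow_last S x (a • y), of_cons_snoc_eq_updateRow_last S x y]
    rw [RingHom.id_apply, smul_eq_mul]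
    exact Matrix.det_updateRow_smul _ _ _ _

/-- `Dbr S · y` as a linear map in the first row. -/
noncomputable def DbrL (S : Fin r → (Fin (r+2) → ℝ)) (y : Fin (r+2) → ℝ) :
    (Fin (r+2) → ℝ) →ₗ[ℝ] ℝ where
  toFun x := Dbr S x y
  map_add' x z := by
    unfold Dbr
    rw [of_cons_eq_updateRow_zero (Fin.snoc S y) (x + z), of_cons_eq_updateRow_zero (Fin.snoc S y) x,
      of_cons_eq_updateRow_zero (Fin.snoc S y) z]
    exact Matrix.det_updateRow_add _ _ _ _
  map_smul' a x := by
    unfold Dbr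
    rw [of_cons_eq_updateRow_zero (Fin.snoc S y) (a • x), of_cons_eq_updateRow_zero (Fin.snoc S y) x]
    rw [RingHom.id_apply, smul_eq_mul]
    exact Matrix.det_updateRow_smul _ _ _ _

lemma Dbr_swap (S : Fin r → (Fin (r+2) → ℝ)) (x y : Fin (r+2) → ℝ) :
    Dbr S x y = - Dbr S y x := by
  have h0 : (0 : Fin (r+2)) ≠ Fin.last (r+1) := by
    simp [Fin.ext_iff]
  have key : Matrix.of (Fin.cons y (Fin.snoc S x)) =
      (Matrix.of (Fin.cons x (Fin.snoc S y))).submatrix (Equiv.swap 0 (Fin.last (r+1))) id := by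
    apply Matrix.ext; intro i j
    rcases eq_or_ne i 0 with rfl | hi0
    · rw [Matrix.submatrix_apply, Equiv.swap_apply_left, id_eq, Matrix.of_apply, Matrix.of_apply,
        Fin.cons_zero, ← Fin.succ_last, Fin.cons_succ, Fin.snoc_last]
    rcases eq_or_ne i (Fin.last (r+1)) with rfl | hil
    · rw [Matrix.submatrix_apply, Equiv.swap_apply_right, id_eq, Matrix.of_apply, Matrix.of_apply,
        Fin.cons_zero, ← Fin.succ_last, Fin.cons_succ, Fin.snoc_last]
    · rw [Matrix.submatrix_apply, Equiv.swap_apply_of_ne_of_ne hi0 hil, id_eq]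
      induction i using Fin.cases with
      | zero => exact absurd rfl hi0
      | succ j' =>
        induction j' using Fin.lastCases with
        | last => exact absurd (Fin.succ_last r ▸ rfl) hil
        | cast j'' =>
          rw [Matrix.of_apply, Matrix.of_apply, Fin.cons_succ, Fin.cons_succ,
            Fin.snoc_castSucc, Fin.snoc_castSucc]
  have hperm := Matrix.det_permute (Equiv.swap 0 (Fin.last (r+1)))
      (Matrix.of (Fin.cons x (Fin.snoc S y)))
  have hsign : Equiv.Perm.sign (Equiv.swap 0 (Fin.last (r+1))) = -1 :=
    Equiv.Perm.sign_swap h0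
  unfold Dbr
  rw [key, hperm, hsign]
  push_cast
  ring

lemma Dbr_self (S : Fin r → (Fin (r+2) → ℝ)) (x : Fin (r+2) → ℝ) :
    Dbr S x x = 0 := by
  apply Matrix.det_zero_of_row_eq (i := (0 : Fin (r+2))) (j := Fin.last (r+1))
  · simp [Fin.ext_iff]
  · funext j
    rw [Matrix.of_apply, Matrix.of_apply, Fin.cons_zero, ← Fin.succ_last, Fin.cons_succ,
      Fin.snoc_last]

lemma Dbr_apply_S (S : Fin r → (Fin (r+2) → ℝ)) (x : Fin (r+2) → ℝ) (q : Fin r) :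
    Dbr S x (S q) = 0 := by
  apply Matrix.det_zero_of_row_eq (i := Fin.succ q.castSucc) (j := Fin.last (r+1))
  · simp [Fin.ext_iff]; omega
  · funext j
    rw [Matrix.of_apply, Matrix.of_apply, Fin.cons_succ, Fin.snoc_castSucc, ← Fin.succ_last,
      Fin.cons_succ, Fin.snoc_last]

lemma Dbr_right_span (S : Fin r → (Fin (r+2) → ℝ)) (x w : Fin (r+2) → ℝ)
    (hw : w ∈ Submodule.span ℝ (Set.range S)) : Dbr S x w = 0 := by
  obtain ⟨cf, hcf⟩ := (Submodule.mem_span_range_iff_exists_fun ℝ).mp hw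
  have h1 : Dbr S x w = DbrR S x w := rfl
  rw [h1, ← hcf, map_sum]
  refine Finset.sum_eq_zero fun q _ => ?_
  rw [LinearMap.map_smul]
  have h2 : DbrR S x (S q) = Dbr S x (S q) := rfl
  rw [h2, Dbr_apply_S]
  simp

lemma Dbr_left_span (S : Fin r → (Fin (r+2) → ℝ)) (x w : Fin (r+2) → ℝ)
    (hw : w ∈ Submodule.span ℝ (Set.range S)) : Dbr S w x = 0 := by
  rw [Dbr_swap, Dbr_right_span S x w hw, neg_zero]


lemma Dbr_eq_zero_of_dep (S : Fin r → (Fin (r+2) → ℝ)) (hS : ¬ LinearIndependent ℝ S)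
    (x y : Fin (r+2) → ℝ) : Dbr S x y = 0 := by
  obtain ⟨g, hg, q₀, hq₀⟩ := Fintype.not_linearIndependent_iff.mp hS
  set A := Matrix.of (Fin.cons x (Fin.snoc S y)) with hA
  set ξ : Fin (r+2) → ℝ := Fin.cons 0 (Fin.snoc g 0) with hξdef
  have hξ : ξ ≠ 0 := by
    intro h
    have h2 := congrFun h (Fin.succ q₀.castSucc)
    rw [hξdef] at h2
    rw [Fin.cons_succ, Fin.snoc_castSucc] at h2
    exact hq₀ h2
  have hmul : Aᵀ *ᵥ ξ = 0 := by
    rw [Matrix.mulVec_transpose]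
    funext j
    have h1 : (ξ ᵥ* A) j = ∑ i : Fin (r+2), ξ i * A i j := by
      simp [Matrix.vecMul, dotProduct]
    rw [h1, Fin.sum_univ_succ, Fin.sum_univ_castSucc]
    have e0 : ξ 0 = 0 := rfl
    have elast : ξ (Fin.succ (Fin.last r)) = 0 := by
      rw [hξdef, Fin.cons_succ, Fin.snoc_last]
    have einner : ∀ q : Fin r, ξ (Fin.succ q.castSucc) * A (Fin.succ q.castSucc) j = g q * S q j := by
      intro q
      rw [hξdef, Fin.cons_succ, Fin.snoc_castSucc, hA]
      rw [Matrix.of_apply, Fin.cons_succ, Fin.snoc_castSucc]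
    rw [e0, elast]
    have h2 : ∑ q : Fin r, ξ q.castSucc.succ * A q.castSucc.succ j = ∑ q : Fin r, g q * S q j :=
      Finset.sum_congr rfl fun q _ => einner q
    rw [h2]
    have h3 := congrFun hg j
    rw [Finset.sum_apply] at h3
    simp only [Pi.smul_apply, smul_eq_mul] at h3
    rw [Pi.zero_apply] at h3
    rw [h3]
    simp
  show A.det = 0
  rw [← Matrix.det_transpose]
  exact Matrix.exists_mulVec_eq_zero_iff.mp ⟨ξ, hξ, hmul⟩

lemma Dbr_expand_right (S : Fin r → (Fin (r+2) → ℝ)) (x a b w : Fin (r+2) → ℝ) (μ ν : ℝ) :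
    Dbr S x (μ • a + ν • b + w) = μ * Dbr S x a + ν * Dbr S x b + Dbr S x w := by
  have h : ∀ y, Dbr S x y = DbrR S x y := fun _ => rfl
  rw [h, map_add, map_add, LinearMap.map_smul, LinearMap.map_smul, ← h, ← h, ← h]
  simp [smul_eq_mul]

lemma Dbr_expand_left (S : Fin r → (Fin (r+2) → ℝ)) (x a b w : Fin (r+2) → ℝ) (μ ν : ℝ) :
    Dbr S (μ • a + ν • b + w) x = μ * Dbr S a x + ν * Dbr S b x + Dbr S w x := by
  have h : ∀ y, Dbr S y x = DbrL S x y := fun _ => rfl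
  rw [h, map_add, map_add, LinearMap.map_smul, LinearMap.map_smul, ← h, ← h, ← h]
  simp [smul_eq_mul]

lemma Dbr_smul_right (S : Fin r → (Fin (r+2) → ℝ)) (x : Fin (r+2) → ℝ) (t : ℝ)
    (y : Fin (r+2) → ℝ) : Dbr S x (t • y) = t * Dbr S x y := by
  have h := (DbrR S x).map_smul t y
  rw [smul_eq_mul] at h
  exact h

lemma Dbr_smul_left (S : Fin r → (Fin (r+2) → ℝ)) (x : Fin (r+2) → ℝ) (t : ℝ)
    (y : Fin (r+2) → ℝ) : Dbr S (t • y) x = t * Dbr S y x := by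
  have h := (DbrL S x).map_smul t y
  rw [smul_eq_mul] at h
  exact h

lemma pluecker_subst (S : Fin r → (Fin (r+2) → ℝ)) (a b d : Fin (r+2) → ℝ) (μ ν : ℝ)
    (w : Fin (r+2) → ℝ) (hw : w ∈ Submodule.span ℝ (Set.range S)) :
    Dbr S a (μ • a + ν • b + w) * Dbr S b d =
      Dbr S a b * Dbr S (μ • a + ν • b + w) d +
        Dbr S a d * Dbr S b (μ • a + ν • b + w) := by
  rw [Dbr_expand_right, Dbr_expand_right, Dbr_expand_left]
  rw [Dbr_self, Dbr_right_span S a w hw, Dbr_right_span S b w hw, Dbr_left_span S d w hw,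
    Dbr_self S b]
  have hba : Dbr S b a = - Dbr S a b := by rw [Dbr_swap]
  rw [hba]
  ring

theorem pluecker (S : Fin r → (Fin (r+2) → ℝ)) (a b c d : Fin (r+2) → ℝ) :
    Dbr S a c * Dbr S b d = Dbr S a b * Dbr S c d + Dbr S a d * Dbr S b c := by
  classical
  set F : Fin (r+3) → (Fin (r+2) → ℝ) := Fin.cons a (Fin.cons b (Fin.cons c S)) with hF
  have hFdep : ¬ LinearIndependent ℝ F := by
    intro h
    have hcard := h.fintype_card_le_finrank
    rw [Module.finrank_fin_fun, Fintype.card_fin] at hcard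
    omega
  obtain ⟨g, hg, i₀, hi₀⟩ := Fintype.not_linearIndependent_iff.mp hFdep
  rw [Fin.sum_univ_succ, Fin.sum_univ_succ, Fin.sum_univ_succ] at hg
  simp only [hF, Fin.cons_zero, Fin.cons_succ] at hg
  have e1 : (Fin.succ (0 : Fin (r+2))) = (1 : Fin (r+3)) := by ext; simp
  have e2 : (Fin.succ (Fin.succ (0 : Fin (r+1)))) = (2 : Fin (r+3)) := by ext; simp
  rw [e1, e2] at hg
  set W : Fin (r+2) → ℝ := ∑ q : Fin r, g q.succ.succ.succ • S q with hWdef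
  have hWspan : W ∈ Submodule.span ℝ (Set.range S) :=
    Submodule.sum_mem _ fun q _ => Submodule.smul_mem _ _ (Submodule.subset_span ⟨q, rfl⟩)
  by_cases h2 : g 2 ≠ 0
  · have hc : g 2 • c = (-(g 0)) • a + (-(g 1)) • b + (-W) := by
      funext t
      have ht := congrFun hg t
      simp only [Pi.add_apply, Pi.smul_apply, Pi.zero_apply, Pi.neg_apply, smul_eq_mul] at ht ⊢
      linarith [ht]
    have h := pluecker_subst S a b d (-(g 0)) (-(g 1)) (-W) (Submodule.neg_mem _ hWspan)
    rw [← hc] at h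
    rw [Dbr_smul_right, Dbr_smul_left, Dbr_smul_right] at h
    have h' : g 2 * (Dbr S a c * Dbr S b d) =
        g 2 * (Dbr S a b * Dbr S c d + Dbr S a d * Dbr S b c) := by linear_combination h
    exact mul_left_cancel₀ h2 h'
  push_neg at h2
  by_cases h1 : g 1 ≠ 0
  · have hb : g 1 • b = (-(g 0)) • a + (-(g 2)) • c + (-W) := by
      funext t
      have ht := congrFun hg t
      simp only [Pi.add_apply, Pi.smul_apply, Pi.zero_apply, Pi.neg_apply, smul_eq_mul] at ht ⊢
      linarith [ht]
    have h := pluecker_subst S a c d (-(g 0)) (-(g 2)) (-W) (Submodule.neg_mem _ hWspan)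
    rw [← hb] at h
    rw [Dbr_smul_right, Dbr_smul_left, Dbr_smul_right] at h
    rw [Dbr_swap S c b] at h
    have h' : g 1 * (Dbr S a c * Dbr S b d) =
        g 1 * (Dbr S a b * Dbr S c d + Dbr S a d * Dbr S b c) := by linear_combination -h
    exact mul_left_cancel₀ h1 h'
  push_neg at h1
  by_cases h0 : g 0 ≠ 0
  · have ha : g 0 • a = (-(g 1)) • b + (-(g 2)) • c + (-W) := by
      funext t
      have ht := congrFun hg t
      simp only [Pi.add_apply, Pi.smul_apply, Pi.zero_apply, Pi.neg_apply, smul_eq_mul] at ht ⊢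
      linarith [ht]
    have h := pluecker_subst S b c d (-(g 1)) (-(g 2)) (-W) (Submodule.neg_mem _ hWspan)
    rw [← ha] at h
    rw [Dbr_smul_right, Dbr_smul_left, Dbr_smul_right] at h
    rw [Dbr_swap S b a, Dbr_swap S c a] at h
    have h' : g 0 * (Dbr S a c * Dbr S b d) =
        g 0 * (Dbr S a b * Dbr S c d + Dbr S a d * Dbr S b c) := by linear_combination h
    exact mul_left_cancel₀ h0 h'
  push_neg at h0
  -- all of g 0, g 1, g 2 vanish: S is linearly dependent
  have hSdep : ¬ LinearIndependent ℝ S := by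
    rw [Fintype.not_linearIndependent_iff]
    refine ⟨fun q => g q.succ.succ.succ, ?_, ?_⟩
    · rw [h0, h1, h2] at hg
      have hW0 : W = 0 := by simpa using hg
      rw [hWdef] at hW0
      exact hW0
    · -- i₀ must be of the form q.succ.succ.succ
      induction i₀ using Fin.cases with
      | zero => exact absurd h0 hi₀
      | succ i₁ =>
        induction i₁ using Fin.cases with
        | zero => exact absurd h1 hi₀
        | succ i₂ =>
          induction i₂ using Fin.cases with
          | zero => exact absurd h2 hi₀
          | succ i₃ => exact ⟨i₃, hi₀⟩
  simp [Dbr_eq_zero_of_dep S hSdep]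


/-! ### Permutation toolkit -/

lemma neg_one_pow_self_mul (k : ℕ) : ((-1 : ℝ))^k * ((-1 : ℝ))^k = 1 := by
  rw [← pow_add]
  exact Even.neg_one_pow ⟨k, rfl⟩

lemma sign_flip {s a b : ℝ} (h : a = s * b) (hs : s * s = 1) : b = s * a := by
  rw [h, ← mul_assoc, hs, one_mul]

lemma succAbove_val {n : ℕ} (p : Fin (n+1)) (j : Fin n) :
    ((p.succAbove j : Fin (n+1)) : ℕ) = if (j : ℕ) < (p : ℕ) then (j : ℕ) else (j : ℕ) + 1 := by
  rw [Fin.succAbove]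
  by_cases h : (j : ℕ) < (p : ℕ)
  · have h' : Fin.castSucc j < p := by rw [Fin.lt_def]; simpa using h
    rw [if_pos h', if_pos h]
    simp
  · have h' : ¬ Fin.castSucc j < p := by rw [Fin.lt_def]; simpa using h
    rw [if_neg h', if_neg h]
    simp

lemma insertNth_eq_comp_cycleRange {n : ℕ} {α : Type*} (p : Fin (n+1)) (z : α)
    (U : Fin n → α) : Fin.insertNth p z U = (Fin.cons z U) ∘ (Fin.cycleRange p) := by
  funext x
  rcases eq_or_ne x p with rfl | hx
  · rw [Fin.insertNth_apply_same, Function.comp_apply, Fin.cycleRange_self, Fin.cons_zero]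
  · obtain ⟨j, rfl⟩ := Fin.exists_succAbove_eq hx
    rw [Fin.insertNth_apply_succAbove, Function.comp_apply, Fin.cycleRange_succAbove,
      Fin.cons_succ]

lemma det_insertNth {n : ℕ} (p : Fin (n+1)) (z : Fin (n+1) → ℝ)
    (U : Fin n → (Fin (n+1) → ℝ)) :
    (Matrix.of (Fin.insertNth p z U)).det = (-1 : ℝ)^(p : ℕ) * (Matrix.of (Fin.cons z U)).det := by
  have h : Matrix.of (Fin.insertNth p z U)
      = (Matrix.of (Fin.cons z U)).submatrix (Fin.cycleRange p) id := by
    apply Matrix.ext; intro i j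
    rw [Matrix.submatrix_apply, id_eq, Matrix.of_apply, Matrix.of_apply,
      insertNth_eq_comp_cycleRange, Function.comp_apply]
  rw [h, Matrix.det_permute, Fin.sign_cycleRange]
  push_cast
  ring

lemma insertNth_last' {n : ℕ} {α : Type*} (z : α) (U : Fin n → α) :
    Fin.insertNth (Fin.last n) z U = @Fin.snoc n (fun _ => α) U z := by
  funext x
  induction x using Fin.lastCases with
  | last => rw [Fin.insertNth_apply_same, Fin.snoc_last]
  | cast j =>
    rw [Fin.snoc_castSucc, ← Fin.succAbove_last, Fin.insertNth_apply_succAbove]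

/-- orientation: `det(rows z,U) = (-1)^p det(rows U-with-z-inserted-at-p)` -/
lemma det_cons_eq_insertNth {n : ℕ} (p : Fin (n+1)) (z : Fin (n+1) → ℝ)
    (U : Fin n → (Fin (n+1) → ℝ)) :
    (Matrix.of (Fin.cons z U)).det = (-1 : ℝ)^(p : ℕ) * (Matrix.of (Fin.insertNth p z U)).det :=
  sign_flip (det_insertNth p z U) (neg_one_pow_self_mul _)

lemma det_cons_eq_snoc {n : ℕ} (z : Fin (n+1) → ℝ) (U : Fin n → (Fin (n+1) → ℝ)) :
    (Matrix.of (Fin.cons z U)).det = (-1 : ℝ)^n * (Matrix.of (Fin.snoc U z)).det := by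
  have h := det_cons_eq_insertNth (Fin.last n) z U
  rw [insertNth_last'] at h
  simpa using h

lemma cons_snoc_eq_snoc_cons {n : ℕ} {α : Type*} (x y : α) (T : Fin n → α) :
    Fin.cons x (Fin.snoc T y) = @Fin.snoc (n+1) (fun _ => α) (Fin.cons x T) y := by
  funext i
  induction i using Fin.cases with
  | zero =>
    rw [Fin.cons_zero, ← Fin.castSucc_zero, Fin.snoc_castSucc, Fin.cons_zero]
  | succ j =>
    induction j using Fin.lastCases with
    | last =>
      rw [Fin.cons_succ, Fin.snoc_last, Fin.succ_last, Fin.snoc_last]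
    | cast j0 =>
      rw [Fin.cons_succ, Fin.snoc_castSucc, Fin.succ_castSucc, Fin.snoc_castSucc, Fin.cons_succ]

/-- expanding along a last row which is the last standard basis vector -/
lemma det_snoc_unit {n : ℕ} (U : Fin (n+1) → (Fin (n+2) → ℝ)) :
    (Matrix.of (Fin.snoc U (Pi.single (Fin.last (n+1)) 1))).det
      = (Matrix.of (fun i : Fin (n+1) => (U i) ∘ Fin.castSucc)).det := by
  rw [Matrix.det_succ_row _ (Fin.last (n+1))]
  rw [Finset.sum_eq_single (Fin.last (n+1))]
  · have h1 : (Matrix.of (Fin.snoc U (Pi.single (Fin.last (n+1)) 1))) (Fin.last (n+1))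
        (Fin.last (n+1)) = 1 := by
      rw [Matrix.of_apply, Fin.snoc_last, Pi.single_eq_same]
    rw [h1]
    have h2 : ((Matrix.of (Fin.snoc U (Pi.single (Fin.last (n+1)) 1))).submatrix
        (Fin.last (n+1)).succAbove (Fin.last (n+1)).succAbove)
        = Matrix.of (fun i : Fin (n+1) => (U i) ∘ Fin.castSucc) := by
      apply Matrix.ext; intro i j
      simp [Fin.succAbove_last, Fin.snoc_castSucc]
    rw [h2, Fin.val_last]
    have he : ((-1:ℝ))^((n+1)+(n+1)) = 1 := Even.neg_one_pow ⟨n+1, rfl⟩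
    rw [he]
    ring
  · intro j _ hj
    have : (Matrix.of (Fin.snoc U (Pi.single (Fin.last (n+1)) 1))) (Fin.last (n+1)) j = 0 := by
      rw [Matrix.of_apply, Fin.snoc_last, Pi.single_eq_of_ne hj]
    rw [this]
    ring
  · intro h
    exact absurd (Finset.mem_univ _) h


/-! ### Index lemmas -/

section Index
variable {u : ℕ} (β' : Fin (u+1))

lemma X1 : (β'.succ.castSucc).succAbove (0 : Fin (u+2)) = 0 := by
  ext
  simp [succAbove_val]

lemma X2 : (β'.succ.castSucc).succAbove (Fin.last (u+1)) = Fin.last (u+2) := by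
  ext
  rw [succAbove_val]
  have : (β' : ℕ) ≤ u := by omega
  simp only [Fin.coe_castSucc, Fin.val_succ, Fin.val_last]
  rw [if_neg (by omega)]

lemma X3 (j0 : Fin u) : (β'.succ.castSucc).succAbove ((j0.castSucc).succ)
    = ((β'.succAbove j0).succ).castSucc := by
  ext
  rw [succAbove_val]
  simp only [Fin.coe_castSucc, Fin.val_succ, succAbove_val]
  split_ifs <;> omega

lemma X4 : (β'.castSucc).succAbove (Fin.last u) = Fin.last (u+1) := by
  ext
  rw [succAbove_val]
  have : (β' : ℕ) ≤ u := by omega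
  simp only [Fin.coe_castSucc, Fin.val_last]
  rw [if_neg (by omega)]

lemma X5 (j0 : Fin u) : (β'.castSucc).succAbove (j0.castSucc)
    = (β'.succAbove j0).castSucc := by
  ext
  rw [succAbove_val]
  simp only [Fin.coe_castSucc, succAbove_val]
  try (split_ifs <;> omega)

lemma X6 : (β'.succ).succAbove (0 : Fin (u+1)) = 0 := by
  ext
  simp [succAbove_val]

lemma X7 (j0 : Fin u) : (β'.succ).succAbove (j0.succ) = (β'.succAbove j0).succ := by
  ext
  rw [succAbove_val]
  simp only [Fin.val_succ, succAbove_val]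
  split_ifs <;> omega

end Index

/-! ### The key determinant identity -/

theorem key_ident (u : ℕ) (N : Matrix (Fin (u+3)) (Fin (u+2)) ℝ) (β' : Fin (u+1)) :
    (N.submatrix (β'.succ.castSucc).succAbove id).det *
      (N.submatrix (fun q : Fin (u+1) => (q.succ).castSucc) Fin.castSucc).det
    = (N.submatrix Fin.castSucc id).det *
        (N.submatrix (fun q : Fin (u+1) => ((β'.castSucc).succAbove q).succ) Fin.castSucc).det
      + (N.submatrix (fun q : Fin (u+1) => (β'.succ.castSucc).succAbove q.castSucc)
            Fin.castSucc).det *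
          (N.submatrix Fin.succ id).det := by
  set β : Fin (u+3) := β'.succ.castSucc with hβ
  set mid : Fin u → Fin (u+3) := fun q => ((β'.succAbove q).succ).castSucc with hmid
  set S : Fin u → (Fin (u+2) → ℝ) := fun q => N (mid q) with hS
  set e : Fin (u+2) → ℝ := Pi.single (Fin.last (u+1)) 1 with he
  -- T evaluation
  have hET : (Fin.cons (N 0) (Fin.snoc S (N (Fin.last (u+2)))) : Fin (u+2) → (Fin (u+2) → ℝ))
      = fun t => N (β.succAbove t) := by
    funext x
    induction x using Fin.cases with
    | zero => simp [X1 β']; rw [hβ, X1 β']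
    | succ j =>
      induction j using Fin.lastCases with
      | last =>
        simp only [Fin.cons_succ, Fin.snoc_last]
        rw [Fin.succ_last, X2 β']
      | cast j0 => simp [Fin.snoc_castSucc, X3 β' j0, hS, hmid]; rw [hβ, X3 β' j0, Fin.succ_castSucc]
  have hT : Dbr S (N 0) (N (Fin.last (u+2))) = (N.submatrix β.succAbove id).det := by
    unfold Dbr
    rw [hET]
    rfl
  -- A1 evaluation
  have hEA1 : Fin.insertNth β'.succ (N β) (Fin.cons (N 0) S)
      = fun t : Fin (u+2) => N t.castSucc := by
    funext x
    rcases eq_or_ne x β'.succ with rfl | hx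
    · rw [Fin.insertNth_apply_same]
    · obtain ⟨j, rfl⟩ := Fin.exists_succAbove_eq hx
      rw [Fin.insertNth_apply_succAbove]
      induction j using Fin.cases with
      | zero => simp [X6 β']
      | succ j0 => simp [X7 β' j0, hS, hmid]
  have hA1 : Dbr S (N 0) (N β) =
      ((-1:ℝ)^u * (-1:ℝ)^(β' : ℕ)) * (N.submatrix Fin.castSucc id).det := by
    unfold Dbr
    rw [cons_snoc_eq_snoc_cons]
    have h1 : (Matrix.of (Fin.snoc (Fin.cons (N 0) S) (N β))).det
        = (-1:ℝ)^(u+1) * (Matrix.of (Fin.cons (N β) (Fin.cons (N 0) S))).det := by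
      have h := det_insertNth (Fin.last (u+1)) (N β) (Fin.cons (N 0) S)
      rw [insertNth_last'] at h
      simpa using h
    have h2 := det_cons_eq_insertNth β'.succ (N β) (Fin.cons (N 0) S)
    rw [hEA1] at h2
    have h3 : (Matrix.of (fun t : Fin (u+2) => N t.castSucc)).det
        = (N.submatrix Fin.castSucc id).det := rfl
    rw [h3] at h2
    rw [h1, h2, Fin.val_succ, pow_succ, pow_succ]
    ring
  -- A2 evaluation
  have hEA2 : Fin.insertNth β'.castSucc (N β) (Fin.snoc S (N (Fin.last (u+2))))
      = fun t : Fin (u+2) => N t.succ := by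
    funext x
    rcases eq_or_ne x β'.castSucc with rfl | hx
    · rw [Fin.insertNth_apply_same]
      show N β = N β'.castSucc.succ; rw [Fin.succ_castSucc]
    · obtain ⟨j, rfl⟩ := Fin.exists_succAbove_eq hx
      rw [Fin.insertNth_apply_succAbove]
      induction j using Fin.lastCases with
      | last => simp [X4 β', Fin.succ_last]
      | cast j0 => simp [Fin.snoc_castSucc, X5 β' j0, hS, hmid]
  have hA2 : Dbr S (N β) (N (Fin.last (u+2))) =
      (-1:ℝ)^(β' : ℕ) * (N.submatrix Fin.succ id).det := by
    unfold Dbr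
    have h := det_cons_eq_insertNth β'.castSucc (N β) (Fin.snoc S (N (Fin.last (u+2))))
    rw [hEA2] at h
    have h3 : (Matrix.of (fun t : Fin (u+2) => N t.succ)).det
        = (N.submatrix Fin.succ id).det := rfl
    rw [h3] at h
    simpa using h
  -- reduction for brackets with e
  have hBred : ∀ x : Fin (u+2) → ℝ, Dbr S x e =
      (Matrix.of (Fin.cons (x ∘ Fin.castSucc)
        (fun q : Fin u => (S q) ∘ Fin.castSucc))).det := by
    intro x
    unfold Dbr
    rw [cons_snoc_eq_snoc_cons, he]
    rw [det_snoc_unit]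
    congr 1
    apply Matrix.ext; intro i j
    induction i using Fin.cases with
    | zero => simp
    | succ j0 => simp
  -- B1
  have hB1 : Dbr S (N 0) e =
      (N.submatrix (fun q : Fin (u+1) => β.succAbove q.castSucc) Fin.castSucc).det := by
    rw [hBred]
    have hE : (Fin.cons ((N 0) ∘ Fin.castSucc) (fun q : Fin u => (S q) ∘ Fin.castSucc)
        : Fin (u+1) → (Fin (u+1) → ℝ))
        = fun q : Fin (u+1) => (N (β.succAbove q.castSucc)) ∘ Fin.castSucc := by
      funext q
      induction q using Fin.cases with
      | zero => simp [Fin.castSucc_zero, X1 β']; rw [hβ, X1 β']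
      | succ j0 =>
        have hrw : (Fin.succ j0).castSucc = (j0.castSucc).succ := (Fin.succ_castSucc j0).symm
        simp [hrw, X3 β' j0, hS, hmid]; rw [hβ, X3 β' j0, Fin.succ_castSucc]
    rw [hE]
    rfl
  -- B2
  have hB2 : Dbr S (N (Fin.last (u+2))) e =
      (-1:ℝ)^u * (N.submatrix (fun q : Fin (u+1) => ((β'.castSucc).succAbove q).succ)
        Fin.castSucc).det := by
    rw [hBred]
    have h := det_cons_eq_snoc ((N (Fin.last (u+2))) ∘ Fin.castSucc)
      (fun q : Fin u => (S q) ∘ Fin.castSucc)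
    have hE : @Fin.snoc u (fun _ => Fin (u+1) → ℝ) (fun q : Fin u => (S q) ∘ Fin.castSucc)
        ((N (Fin.last (u+2))) ∘ Fin.castSucc)
        = fun q : Fin (u+1) => (N (((β'.castSucc).succAbove q).succ)) ∘ Fin.castSucc := by
      funext q
      induction q using Fin.lastCases with
      | last => simp [X4 β', Fin.succ_last]
      | cast j0 => simp [Fin.snoc_castSucc, X5 β' j0, hS, hmid]
    rw [hE] at h
    rw [h]
    rfl
  -- B3
  have hB3 : Dbr S (N β) e =
      (-1:ℝ)^(β' : ℕ) * (N.submatrix (fun q : Fin (u+1) => (q.succ).castSucc)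
        Fin.castSucc).det := by
    rw [hBred]
    have h := det_cons_eq_insertNth β' ((N β) ∘ Fin.castSucc)
      (fun q : Fin u => (S q) ∘ Fin.castSucc)
    have hE : Fin.insertNth β' ((N β) ∘ Fin.castSucc)
        (fun q : Fin u => (S q) ∘ Fin.castSucc)
        = fun q : Fin (u+1) => (N ((q.succ).castSucc)) ∘ Fin.castSucc := by
      funext x
      rcases eq_or_ne x β' with rfl | hx
      · rw [Fin.insertNth_apply_same]
      · obtain ⟨j, rfl⟩ := Fin.exists_succAbove_eq hx
        rw [Fin.insertNth_apply_succAbove]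
        try simp [hS, hmid]
    rw [hE] at h
    rw [h]
    rfl
  have plk := pluecker S (N 0) (N β) (N (Fin.last (u+2))) e
  rw [hT, hA1, hA2, hB1, hB2, hB3] at plk
  rcases Nat.even_or_odd u with hu | hu <;> rcases Nat.even_or_odd (β' : ℕ) with hb | hb <;>
    rw [hu.neg_one_pow, hb.neg_one_pow] at plk <;>
    first
      | linear_combination plk
      | linear_combination -plk


/-! ### StrictMono facts -/

lemma strictMono_val_add {n m : ℕ} (r : Fin n → Fin m) (hr : StrictMono r) :
    ∀ (k : ℕ) (x y : Fin n), (y : ℕ) = (x : ℕ) + k → (r x : ℕ) + k ≤ (r y : ℕ) := by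
  intro k
  induction k with
  | zero =>
    intro x y h
    have : x = y := Fin.ext (by omega)
    subst this
    omega
  | succ k ih =>
    intro x y h
    have hxy : (x : ℕ) + k < n := by have := y.isLt; omega
    set y0 : Fin n := ⟨(x : ℕ) + k, hxy⟩ with hy0
    have h1 := ih x y0 rfl
    have h2 : y0 < y := by rw [Fin.lt_def]; simp [hy0]; omega
    have h3 := hr h2
    rw [Fin.lt_def] at h3
    omega

lemma exists_gap {t m : ℕ} (r : Fin (t+1) → Fin m) (hr : StrictMono r)
    (hd : (r 0 : ℕ) + t < (r (Fin.last t) : ℕ)) :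
    ∃ p : Fin t, (r p.castSucc : ℕ) + 1 < (r p.succ : ℕ) := by
  by_contra hcon
  push_neg at hcon
  have key : ∀ x : Fin (t+1), (r x : ℕ) ≤ (r 0 : ℕ) + (x : ℕ) := by
    intro x
    induction x using Fin.induction with
    | zero => simp
    | succ p ih =>
      have := hcon p
      rw [Fin.val_succ]
      simp only [Fin.coe_castSucc] at ih
      omega
  have := key (Fin.last t)
  rw [Fin.val_last] at this
  omega

lemma strictMono_insertNth {t m : ℕ} (r : Fin (t+1) → Fin m) (hr : StrictMono r)
    (p : Fin t) (h0 : Fin m) (hlow : r p.castSucc < h0) (hhigh : h0 < r p.succ) :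
    StrictMono (Fin.insertNth p.succ.castSucc h0 r) := by
  set β : Fin (t+2) := p.succ.castSucc with hβ
  have hβval : (β : ℕ) = (p : ℕ) + 1 := by simp [hβ]
  intro x y hxy
  rcases eq_or_ne x β with rfl | hx
  · rcases eq_or_ne y β with rfl | hy
    · exact absurd hxy (lt_irrefl _)
    · obtain ⟨j, rfl⟩ := Fin.exists_succAbove_eq hy
      rw [Fin.insertNth_apply_same, Fin.insertNth_apply_succAbove]
      have hj : (p : ℕ) + 1 ≤ (j : ℕ) := by
        have := hxy
        rw [Fin.lt_def] at this
        have hv := succAbove_val β j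
        rw [hβval] at hv this
        by_cases hc : (j : ℕ) < (p : ℕ) + 1 <;> [rw [if_pos hc] at hv; rw [if_neg hc] at hv] <;> omega
      have : r p.succ ≤ r j := hr.monotone (by rw [Fin.le_def, Fin.val_succ]; omega)
      exact lt_of_lt_of_le hhigh this
  · obtain ⟨j, rfl⟩ := Fin.exists_succAbove_eq hx
    rcases eq_or_ne y β with rfl | hy
    · rw [Fin.insertNth_apply_same, Fin.insertNth_apply_succAbove]
      have hj : (j : ℕ) ≤ (p : ℕ) := by
        have := hxy
        rw [Fin.lt_def] at this
        have hv := succAbove_val β j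
        rw [hβval] at hv this
        by_cases hc : (j : ℕ) < (p : ℕ) + 1 <;> [rw [if_pos hc] at hv; rw [if_neg hc] at hv] <;> omega
      have : r j ≤ r p.castSucc := hr.monotone (by rw [Fin.le_def, Fin.coe_castSucc]; omega)
      exact lt_of_le_of_lt this hlow
    · obtain ⟨j', rfl⟩ := Fin.exists_succAbove_eq hy
      rw [Fin.insertNth_apply_succAbove, Fin.insertNth_apply_succAbove]
      apply hr
      have hv := succAbove_val β j
      have hv' := succAbove_val β j'
      rw [Fin.lt_def] at hxy ⊢
      rw [hv, hv'] at hxy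
      split_ifs at hxy <;> omega

/-! ### Gap filling -/

lemma gapfill {u m n : ℕ} (M : Matrix (Fin m) (Fin n) ℝ)
    (r : Fin (u+2) → Fin m) (s : Fin (u+2) → Fin n)
    (hr : StrictMono r) (hs : StrictMono s) (p : Fin (u+1))
    (hgap : (r p.castSucc : ℕ) + 1 < (r p.succ : ℕ))
    (posA : ∀ r' : Fin (u+2) → Fin m, StrictMono r' →
      ((r' (Fin.last (u+1)) : ℕ) - (r' 0 : ℕ)) < ((r (Fin.last (u+1)) : ℕ) - (r 0 : ℕ)) →
      0 < (M.submatrix r' s).det)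
    (posB : ∀ (r'' : Fin (u+1) → Fin m) (s'' : Fin (u+1) → Fin n),
      StrictMono r'' → StrictMono s'' → 0 < (M.submatrix r'' s'').det) :
    0 < (M.submatrix r s).det := by
  have hβ0 : ((r p.castSucc : ℕ) + 1) < m := by
    have := (r p.succ).isLt
    omega
  set h0 : Fin m := ⟨(r p.castSucc : ℕ) + 1, hβ0⟩ with hh0
  have hlow : r p.castSucc < h0 := by rw [Fin.lt_def]; simp [hh0]
  have hhigh : h0 < r p.succ := by rw [Fin.lt_def]; simp [hh0]; omega
  set w : Fin (u+3) → Fin m := Fin.insertNth p.succ.castSucc h0 r with hw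
  have hwmono : StrictMono w := strictMono_insertNth r hr p h0 hlow hhigh
  have hwsa : ∀ j : Fin (u+2), w (p.succ.castSucc.succAbove j) = r j := fun j =>
    Fin.insertNth_apply_succAbove _ _ _ _
  have hw0 : w 0 = r 0 := by rw [← X1 p, hwsa]
  have hwlast : w (Fin.last (u+2)) = r (Fin.last (u+1)) := by rw [← X2 p, hwsa]
  have key := key_ident u (M.submatrix w s) p
  rw [Matrix.submatrix_submatrix, Matrix.submatrix_submatrix, Matrix.submatrix_submatrix,
    Matrix.submatrix_submatrix, Matrix.submatrix_submatrix, Matrix.submatrix_submatrix] at key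
  -- identify the target
  have hTrows : w ∘ (p.succ.castSucc).succAbove = r := funext fun j => hwsa j
  rw [hTrows] at key
  have hscomp : s ∘ id = s := rfl
  rw [hscomp] at key
  -- positivity of the five other determinants
  have hmono_cast : StrictMono (fun q : Fin (u+1) => q.castSucc) := fun a b hab => by
    rwa [Fin.castSucc_lt_castSucc_iff]
  have hmono_succ : StrictMono (fun q : Fin (u+1) => q.succ) := fun a b hab => by
    rwa [Fin.succ_lt_succ_iff]
  have hsLeft : StrictMono (s ∘ Fin.castSucc) := fun a b hab =>
    hs (by rwa [Fin.castSucc_lt_castSucc_iff])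
  have hB3 : 0 < (M.submatrix (w ∘ fun q : Fin (u+1) => q.succ.castSucc) (s ∘ Fin.castSucc)).det := by
    apply posB
    · intro a b hab
      apply hwmono
      simp only [Fin.castSucc_lt_castSucc_iff, Fin.succ_lt_succ_iff]
      exact hab
    · exact hsLeft
  have hB1 : 0 < (M.submatrix (w ∘ fun q : Fin (u+1) => (p.succ.castSucc).succAbove q.castSucc)
      (s ∘ Fin.castSucc)).det := by
    apply posB
    · intro a b hab
      apply hwmono
      exact Fin.succAbove_lt_succAbove_iff.mpr (Fin.castSucc_lt_castSucc_iff.mpr hab)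
    · exact hsLeft
  have hB2 : 0 < (M.submatrix (w ∘ fun q : Fin (u+1) => ((p.castSucc).succAbove q).succ)
      (s ∘ Fin.castSucc)).det := by
    apply posB
    · intro a b hab
      apply hwmono
      exact Fin.succ_lt_succ_iff.mpr (Fin.succAbove_lt_succAbove_iff.mpr hab)
    · exact hsLeft
  have hwpen : (w ((Fin.last (u+1)).castSucc) : ℕ) < (w (Fin.last (u+2)) : ℕ) := by
    have := hwmono (show (Fin.last (u+1)).castSucc < Fin.last (u+2) by
      rw [Fin.lt_def]; simp)
    rwa [Fin.lt_def] at this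
  have hw1 : (w 0 : ℕ) < (w (Fin.castSucc 0).succ : ℕ) := by
    have := hwmono (show (0 : Fin (u+3)) < (Fin.castSucc (0 : Fin (u+1))).succ by
      rw [Fin.lt_def]; simp)
    rwa [Fin.lt_def] at this
  have hvlast : (w (Fin.last (u+2)) : ℕ) = (r (Fin.last (u+1)) : ℕ) := congrArg Fin.val hwlast
  have hv0 : (w 0 : ℕ) = (r 0 : ℕ) := congrArg Fin.val hw0
  have hA1 : 0 < (M.submatrix (w ∘ Fin.castSucc) s).det := by
    apply posA
    · intro a b hab
      exact hwmono (by rwa [Fin.castSucc_lt_castSucc_iff])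
    · have hq1 : (w ∘ Fin.castSucc) (Fin.last (u+1)) = w ((Fin.last (u+1)).castSucc) := rfl
      have hq2 : (w ∘ Fin.castSucc) 0 = w 0 := by
        rw [Function.comp_apply, Fin.castSucc_zero]
      have hz : (w 0 : ℕ) < (w ((Fin.last (u+1)).castSucc) : ℕ) := by
        have := hwmono (show (0 : Fin (u+3)) < (Fin.last (u+1)).castSucc by
          rw [Fin.lt_def]; simp)
        rwa [Fin.lt_def] at this
      rw [hq1, hq2, hv0]
      omega
  have hA2 : 0 < (M.submatrix (w ∘ Fin.succ) s).det := by
    apply posA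
    · intro a b hab
      exact hwmono (by rwa [Fin.succ_lt_succ_iff])
    · have hq1 : (w ∘ Fin.succ) (Fin.last (u+1)) = w (Fin.last (u+2)) := by
        rw [Function.comp_apply, Fin.succ_last]
      have hq2 : (w ∘ Fin.succ) 0 = w (Fin.castSucc 0).succ := rfl
      have hz : (w (Fin.castSucc 0).succ : ℕ) < (w (Fin.last (u+2)) : ℕ) := by
        have := hwmono (show ((Fin.castSucc (0 : Fin (u+1))).succ : Fin (u+3)) < Fin.last (u+2) by
          rw [Fin.lt_def]; simp)
        rwa [Fin.lt_def] at this
      rw [hq1, hq2, hvlast]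
      omega
  nlinarith [key, hB3, hB1, hB2, hA1, hA2]


/-! ### Fekete's criterion -/

theorem fekete_rec : ∀ (t D m n : ℕ) (M : Matrix (Fin m) (Fin n) ℝ),
    (∀ (t' a b : ℕ) (ha : a + t' < m) (hb : b + t' < n),
      0 < (M.submatrix (fun p : Fin (t'+1) => (⟨a + ↑p, by have := p.isLt; omega⟩ : Fin m))
        (fun q : Fin (t'+1) => (⟨b + ↑q, by have := q.isLt; omega⟩ : Fin n))).det) →
    ∀ (r : Fin (t+1) → Fin m) (s : Fin (t+1) → Fin n), StrictMono r → StrictMono s →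
    ((r (Fin.last t) : ℕ) - (r 0 : ℕ)) + ((s (Fin.last t) : ℕ) - (s 0 : ℕ)) ≤ D →
    0 < (M.submatrix r s).det := by
  intro t
  induction t using Nat.strong_induction_on with
  | _ t IHt =>
  intro D
  induction D using Nat.strong_induction_on with
  | _ D IHD =>
  intro m n M hsolid r s hr hs hmeas
  have hrge := strictMono_val_add r hr t 0 (Fin.last t) (by simp [Fin.val_last])
  have hsge := strictMono_val_add s hs t 0 (Fin.last t) (by simp [Fin.val_last])
  by_cases hrd : (r (Fin.last t) : ℕ) = (r 0 : ℕ) + t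
  · by_cases hsd : (s (Fin.last t) : ℕ) = (s 0 : ℕ) + t
    · -- both solid
      have ha : (r 0 : ℕ) + t < m := by have := (r (Fin.last t)).isLt; omega
      have hb : (s 0 : ℕ) + t < n := by have := (s (Fin.last t)).isLt; omega
      have hrx : ∀ x : Fin (t+1), (r x : ℕ) = (r 0 : ℕ) + (x : ℕ) := by
        intro x
        have hxt := x.isLt
        have h1 := strictMono_val_add r hr (x : ℕ) 0 x (by simp)
        have h2 := strictMono_val_add r hr (t - (x : ℕ)) x (Fin.last t)
          (by rw [Fin.val_last]; omega)
        omega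
      have hsx : ∀ x : Fin (t+1), (s x : ℕ) = (s 0 : ℕ) + (x : ℕ) := by
        intro x
        have hxt := x.isLt
        have h1 := strictMono_val_add s hs (x : ℕ) 0 x (by simp)
        have h2 := strictMono_val_add s hs (t - (x : ℕ)) x (Fin.last t)
          (by rw [Fin.val_last]; omega)
        omega
      have heq : M.submatrix r s = M.submatrix
          (fun p : Fin (t+1) => (⟨(r 0 : ℕ) + ↑p, by have := p.isLt; omega⟩ : Fin m))
          (fun q : Fin (t+1) => (⟨(s 0 : ℕ) + ↑q, by have := q.isLt; omega⟩ : Fin n)) := by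
        apply Matrix.ext; intro p q
        rw [Matrix.submatrix_apply, Matrix.submatrix_apply]
        congr 1
        · exact Fin.ext (hrx p)
        · exact Fin.ext (hsx q)
      rw [heq]
      exact hsolid t (r 0) (s 0) ha hb
    · -- column gap
      obtain ⟨p, hp⟩ := exists_gap s hs (by omega)
      rcases t with _ | u
      · exact (Nat.not_lt_zero _ p.isLt).elim
      · rw [← Matrix.det_transpose, Matrix.transpose_submatrix]
        apply gapfill Mᵀ s r hs hr p hp
        · intro s' hs' hless
          rw [← Matrix.transpose_submatrix, Matrix.det_transpose]
          exact IHD (((r (Fin.last (u+1)) : ℕ) - (r 0 : ℕ))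
              + ((s' (Fin.last (u+1)) : ℕ) - (s' 0 : ℕ))) (by omega)
            m n M hsolid r s' hr hs' le_rfl
        · intro r'' s'' hr'' hs''
          rw [← Matrix.transpose_submatrix, Matrix.det_transpose]
          exact IHt u (by omega) _ m n M hsolid s'' r'' hs'' hr'' le_rfl
  · -- row gap
    obtain ⟨p, hp⟩ := exists_gap r hr (by omega)
    rcases t with _ | u
    · exact (Nat.not_lt_zero _ p.isLt).elim
    · apply gapfill M r s hr hs p hp
      · intro r' hr' hless
        exact IHD (((r' (Fin.last (u+1)) : ℕ) - (r' 0 : ℕ))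
            + ((s (Fin.last (u+1)) : ℕ) - (s 0 : ℕ))) (by omega)
          m n M hsolid r' s hr' hs le_rfl
      · intro r'' s'' hr'' hs''
        exact IHt u (by omega) _ m n M hsolid r'' s'' hr'' hs'' le_rfl

theorem fekete {m n : ℕ} (M : Matrix (Fin m) (Fin n) ℝ)
    (hsolid : ∀ (t' a b : ℕ) (ha : a + t' < m) (hb : b + t' < n),
      0 < (M.submatrix (fun p : Fin (t'+1) => (⟨a + ↑p, by have := p.isLt; omega⟩ : Fin m))
        (fun q : Fin (t'+1) => (⟨b + ↑q, by have := q.isLt; omega⟩ : Fin n))).det) :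
    ∀ (t : ℕ) (r : Fin (t + 1) → Fin m) (s : Fin (t + 1) → Fin n),
      StrictMono r → StrictMono s → 0 < (M.submatrix r s).det := by
  intro t r s hr hs
  exact fekete_rec t (((r (Fin.last t) : ℕ) - (r 0 : ℕ)) + ((s (Fin.last t) : ℕ) - (s 0 : ℕ)))
    m n M hsolid r s hr hs le_rfl

end TPAux



/-- A real matrix is totally positive if every square minor (taken on strictly increasing row
indices and strictly increasing column indices) has positive determinant. -/
def Matrix.TotallyPositive {m n : ℕ} (M : Matrix (Fin m) (Fin n) ℝ) : Prop :=
  ∀ (t : ℕ) (r : Fin (t + 1) → Fin m) (s : Fin (t + 1) → Fin n),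
    StrictMono r → StrictMono s → 0 < (M.submatrix r s).det

/-- For `0 ≤ i ≤ ⌊d/2⌋` and `c = (c₀, …, c_d) ∈ ℝ^(d+1)` (extended by zero),
the `(i+1) × (d−i+1)` Toeplitz matrix `φ^i_d(c)` with `(p,q)` entry `c_{i+q−p}` is totally
positive iff `c` is strictly `i`-Lorentzian, i.e. iff all the Toeplitz determinants
`det((c_{m+j+q−p})_{0 ≤ p,q ≤ j})` for `0 ≤ j ≤ i`, `0 ≤ m ≤ d−2j` are positive. -/
theorem toeplitz_totallyPositive_iff_strictlyLorentzian
    (d i : ℕ) (hi : i ≤ d / 2) (c : ℕ → ℝ) (hc : ∀ k, d < k → c k = 0) :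
    (Matrix.of fun (p : Fin (i + 1)) (q : Fin (d - i + 1)) =>
        c (i + q.val - p.val)).TotallyPositive
      ↔ ∀ j, j ≤ i → ∀ m, m ≤ d - 2*j →
          0 < (Matrix.of fun p q : Fin (j + 1) => c (m + j + q.val - p.val)).det := by
  have hid : i ≤ d := by omega
  constructor
  · intro hTP j hj m hm
    obtain ⟨a, b, haj, hbj, hkey⟩ : ∃ a b : ℕ, a + j ≤ i ∧ b + j ≤ d - i ∧
        i + b = a + (m + j) := by
      rcases le_or_gt m (d - i - j) with hcase | hcase
      · exact ⟨i - j, m, by omega, by omega, by omega⟩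
      · exact ⟨d - 2*j - m, d - i - j, by omega, by omega, by omega⟩
    have hr : StrictMono (fun p : Fin (j+1) =>
        (⟨a + ↑p, by have := p.isLt; omega⟩ : Fin (i+1))) := by
      intro x y hxy
      rw [Fin.lt_def] at hxy ⊢
      simpa using hxy
    have hs : StrictMono (fun q : Fin (j+1) =>
        (⟨b + ↑q, by have := q.isLt; omega⟩ : Fin (d-i+1))) := by
      intro x y hxy
      rw [Fin.lt_def] at hxy ⊢
      simpa using hxy
    have h := hTP j _ _ hr hs
    have heq : (Matrix.of fun (p : Fin (i + 1)) (q : Fin (d - i + 1)) =>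
          c (i + q.val - p.val)).submatrix
          (fun p : Fin (j+1) => (⟨a + ↑p, by have := p.isLt; omega⟩ : Fin (i+1)))
          (fun q : Fin (j+1) => (⟨b + ↑q, by have := q.isLt; omega⟩ : Fin (d-i+1)))
        = Matrix.of (fun p q : Fin (j + 1) => c (m + j + q.val - p.val)) := by
      apply Matrix.ext; intro p q
      rw [Matrix.submatrix_apply, Matrix.of_apply, Matrix.of_apply]
      congr 1
      have hp := p.isLt
      have hq := q.isLt
      show i + (b + ↑q) - (a + ↑p) = m + j + ↑q - ↑p
      omega
    rw [heq] at h
    exact h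
  · intro hL t r s hr hs
    apply TPAux.fekete _ ?_ t r s hr hs
    intro t' a b ha hb
    have ht'i : t' ≤ i := by omega
    have hm' : i + b - (a + t') ≤ d - 2*t' := by omega
    have h := hL t' ht'i (i + b - (a + t')) hm'
    have heq : (Matrix.of fun (p : Fin (i + 1)) (q : Fin (d - i + 1)) =>
          c (i + q.val - p.val)).submatrix
          (fun p : Fin (t'+1) => (⟨a + ↑p, by have := p.isLt; omega⟩ : Fin (i+1)))
          (fun q : Fin (t'+1) => (⟨b + ↑q, by have := q.isLt; omega⟩ : Fin (d-i+1)))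
        = Matrix.of (fun p q : Fin (t' + 1) => c (i + b - (a + t') + t' + q.val - p.val)) := by
      apply Matrix.ext; intro p q
      rw [Matrix.submatrix_apply, Matrix.of_apply, Matrix.of_apply]
      congr 1
      have hp := p.isLt
      have hq := q.isLt
      show i + (b + ↑q) - (a + ↑p) = i + b - (a + t') + t' + ↑q - ↑p
      omega
    rw [heq]
    exact h
end

section
/- Let d ≥ 0 and let c_0, …, c_d be nonnegative real numbers such that the univariate polynomial f(t) = Σ_{k=0}^d c_k t^k splits into linear factors over ℝ (i.e., all of its complex roots are real; since the coefficients are nonnegative, all roots are then nonpositive, so F = Σ_k binom(d,k) c_k X^k Y^{d−k} is normally stable). Then for every 0 ≤ i ≤ ⌊d/2⌋, the (i+1) × (d−i+1) Toeplitz matrix φ^i_d(c) with (p,q) entry c_{i+q−p} (where c_k = 0 for k < 0 or k > d) is totally nonnegative; that is, c is i-Lorentzian for every i ≥ 0. -/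
open Polynomial Matrix

/-- entry of the infinite Toeplitz matrix of the coefficients of `g`,
with integer column index. -/
noncomputable def colFn (g : ℝ[X]) (k : ℕ) (j : ℤ) : ℝ :=
  if (k : ℤ) ≤ j then g.coeff (j - k).toNat else 0

def TNP (g : ℝ[X]) : Prop :=
  ∀ (t : ℕ) (k : Fin (t + 1) → ℕ) (s : Fin (t + 1) → ℤ),
    StrictMono k → StrictMono s →
      0 ≤ (Matrix.of fun a b => colFn g (k a) (s b)).det

-- inversion lemma
lemma perm_ne_one_exists_inversion {n : ℕ} (σ : Equiv.Perm (Fin n)) (h : σ ≠ 1) :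
    ∃ i j : Fin n, i < j ∧ σ j < σ i := by
  by_contra hcon
  push_neg at hcon
  have hmono : StrictMono σ := by
    intro i j hij
    rcases lt_or_ge (σ i) (σ j) with h1 | h1
    · exact h1
    · rcases h1.lt_or_eq with h2 | h2
      · exact absurd h2 (not_lt.2 (hcon i j hij))
      · exact absurd (σ.injective h2.symm) (ne_of_lt hij)
  apply h
  have : (StrictMono.orderIsoOfSurjective σ hmono σ.surjective) = OrderIso.refl (Fin n) :=
    Subsingleton.elim _ _
  refine Equiv.ext fun i => ?_
  have := congrArg (fun e => (e : Fin n ≃o Fin n) i) this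
  simpa using this

lemma base_TNP (a : ℝ) (ha : 0 ≤ a) : TNP (C a) := by
  intro t k s hk hs
  set M := Matrix.of fun a' b => colFn (C a) (k a') (s b) with hM
  have hent : ∀ p q, M p q = if s q = (k p : ℤ) then a else 0 := by
    intro p q
    simp only [hM, Matrix.of_apply, colFn, Polynomial.coeff_C]
    split_ifs with h1 h2 h3 h4
    · rfl
    · exfalso; apply h3; omega
    · exfalso; apply h2; omega
    · rfl
    · exfalso; apply h1; omega
    · rfl
  rw [Matrix.det_apply]
  rw [Finset.sum_eq_single (1 : Equiv.Perm (Fin (t + 1)))]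
  · simp only [Equiv.Perm.sign_one, one_smul, Equiv.Perm.one_apply]
    apply Finset.prod_nonneg
    intro q _
    rw [hent]
    split_ifs
    · exact ha
    · exact le_refl 0
  · intro σ _ hσ
    obtain ⟨i, j, hij, hσij⟩ := perm_ne_one_exists_inversion σ hσ
    have hzero : M (σ i) i = 0 ∨ M (σ j) j = 0 := by
      by_contra hcon
      push_neg at hcon
      have h1 : s i = (k (σ i) : ℤ) := by
        by_contra h; exact hcon.1 (by rw [hent, if_neg h])
      have h2 : s j = (k (σ j) : ℤ) := by
        by_contra h; exact hcon.2 (by rw [hent, if_neg h])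
      have h3 : s i < s j := hs hij
      rw [h1, h2, Int.ofNat_lt] at h3
      exact absurd (hk.lt_iff_lt.mp h3) (not_lt.2 (le_of_lt hσij))
    rcases hzero with hz | hz
    · have : (∏ x, M (σ x) x) = 0 := Finset.prod_eq_zero (Finset.mem_univ i) hz
      rw [this, smul_zero]
    · have : (∏ x, M (σ x) x) = 0 := Finset.prod_eq_zero (Finset.mem_univ j) hz
      rw [this, smul_zero]
  · intro h; exact absurd (Finset.mem_univ _) h

lemma colFn_mul (g : ℝ[X]) (r : ℝ) (k : ℕ) (j : ℤ) :
    colFn ((X + C r) * g) k j = r * colFn g k j + colFn g k (j - 1) := by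
  have hco : ∀ n : ℕ, ((X + C r) * g).coeff (n + 1) = g.coeff n + r * g.coeff (n + 1) := by
    intro n
    rw [add_mul, Polynomial.coeff_add, Polynomial.coeff_X_mul, Polynomial.coeff_C_mul]
  have hco0 : ((X + C r) * g).coeff 0 = r * g.coeff 0 := by
    rw [Polynomial.mul_coeff_zero, Polynomial.coeff_add, Polynomial.coeff_X_zero,
      Polynomial.coeff_C_zero, zero_add]
  unfold colFn
  rcases lt_trichotomy (j : ℤ) (k : ℤ) with h | h | h
  · rw [if_neg (by omega), if_neg (by omega), if_neg (by omega)]; ring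
  · rw [if_pos (by omega), if_pos (by omega), if_neg (by omega)]
    have h0 : (j - (k : ℤ)).toNat = 0 := by omega
    rw [h0, hco0]; ring
  · rw [if_pos (by omega), if_pos (by omega), if_pos (by omega)]
    have h1 : (j - (k : ℤ)).toNat = ((j - 1 - (k : ℤ)).toNat) + 1 := by omega
    rw [h1, hco]; ring

lemma step_TNP (g : ℝ[X]) (r : ℝ) (hr : 0 ≤ r) (hg : TNP g) : TNP ((X + C r) * g) := by
  intro t k s hk hs
  rw [← Matrix.det_transpose]
  have htr : (Matrix.of fun a b => colFn ((X + C r) * g) (k a) (s b)).transpose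
      = Matrix.of fun b a => colFn ((X + C r) * g) (k a) (s b) := rfl
  rw [htr]
  set u : Fin (t + 1) → Bool → (Fin (t + 1) → ℝ) :=
    fun b x a => if x then r * colFn g (k a) (s b) else colFn g (k a) (s b - 1) with hu
  have hsum : (Matrix.of fun b a => colFn ((X + C r) * g) (k a) (s b))
      = fun b => ∑ x : Bool, u b x := by
    funext b a
    simp only [Matrix.of_apply, hu, Fintype.sum_bool, if_true, if_false]
    rw [colFn_mul]
    rfl
  have hdet : ∀ N : Matrix (Fin (t + 1)) (Fin (t + 1)) ℝ,
      N.det = (Matrix.detRowAlternating :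
        (Fin (t + 1) → ℝ) [⋀^Fin (t + 1)]→ₗ[ℝ] ℝ).toMultilinearMap N := fun _ => rfl
  rw [hdet, hsum]
  rw [MultilinearMap.map_sum]
  apply Finset.sum_nonneg
  intro ρ _
  change 0 ≤ Matrix.det (fun b => u b (ρ b))
  set s' : Fin (t + 1) → ℤ := fun b => s b - (if ρ b then 0 else 1) with hs'
  have hmat : (fun b => u b (ρ b)) = Matrix.of fun b a =>
      (if ρ b then r else 1) * colFn g (k a) (s' b) := by
    funext b a
    simp only [hu, hs', Matrix.of_apply]
    by_cases h : ρ b <;> simp [h]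
  rw [hmat]
  have := Matrix.det_mul_column (fun b => if ρ b then r else (1:ℝ))
    (Matrix.of fun b a => colFn g (k a) (s' b))
  rw [show (Matrix.of fun b a => (if ρ b then r else 1) * colFn g (k a) (s' b))
      = Matrix.of fun b a => (fun b => if ρ b then r else (1:ℝ)) b
          * (Matrix.of fun b a => colFn g (k a) (s' b)) b a from rfl, this]
  apply mul_nonneg
  · exact Finset.prod_nonneg fun b _ => by split_ifs; exact hr; exact zero_le_one
  have hmono : Monotone s' := by
    intro b b' hbb'
    rcases eq_or_lt_of_le hbb' with h | h
    · rw [h]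
    · have := hs h
      simp only [hs']
      split_ifs <;> omega
  by_cases hinj : Function.Injective s'
  · have hsm : StrictMono s' := hmono.strictMono_of_injective hinj
    rw [← Matrix.det_transpose]
    have htr2 : (Matrix.of fun b a => colFn g (k a) (s' b)).transpose
        = Matrix.of fun a b => colFn g (k a) (s' b) := rfl
    rw [htr2]
    exact hg t k s' hk hsm
  · simp only [Function.Injective, not_forall] at hinj
    obtain ⟨b, b', hbb', hne⟩ := hinj
    rw [Matrix.det_zero_of_row_eq hne]
    · funext a'
      simp only [Matrix.of_apply, hbb']



/-- A real matrix is totally nonnegative if every square minor (taken on strictly increasing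
row indices and strictly increasing column indices) has nonnegative determinant. -/
def Matrix.TotallyNonneg {m n : ℕ} (M : Matrix (Fin m) (Fin n) ℝ) : Prop :=
  ∀ (t : ℕ) (r : Fin (t + 1) → Fin m) (s : Fin (t + 1) → Fin n),
    StrictMono r → StrictMono s → 0 ≤ (M.submatrix r s).det

lemma prod_TNP (a : ℝ) (ha : 0 ≤ a) (R : Multiset ℝ) (hR : ∀ r ∈ R, 0 ≤ r) :
    TNP (C a * (R.map fun r => X + C r).prod) := by
  induction R using Multiset.induction with
  | empty => simpa using base_TNP a ha
  | cons r R ih =>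
    have heq : C a * ((r ::ₘ R).map fun r => X + C r).prod
        = (X + C r) * (C a * (R.map fun r => X + C r).prod) := by
      rw [Multiset.map_cons, Multiset.prod_cons]; ring
    rw [heq]
    exact step_TNP _ r (hR r (Multiset.mem_cons_self _ _))
      (ih fun x hx => hR x (Multiset.mem_cons_of_mem hx))

/-- Let `c₀, …, c_d` be nonnegative reals (extended by zero) such that
`f(t) = Σ_k c_k t^k` splits into linear factors over `ℝ` (so that
`F = Σ_k binom(d,k) c_k X^k Y^(d−k)` is normally stable).  Then for every `0 ≤ i ≤ ⌊d/2⌋` the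
`(i+1) × (d−i+1)` Toeplitz matrix `φ^i_d(c)` with `(p,q)` entry `c_{i+q−p}` is totally
nonnegative; that is, `c` is `i`-Lorentzian for every `i ≥ 0`. -/
theorem normallyStable_toeplitz_totallyNonneg
    (d : ℕ) (c : ℕ → ℝ) (hc : ∀ k, d < k → c k = 0)
    (hnn : ∀ k, 0 ≤ c k)
    (hsplit : Polynomial.Splits (Polynomial.map (RingHom.id ℝ)
      (∑ k ∈ Finset.range (d + 1), Polynomial.C (c k) * Polynomial.X ^ k))) :
    ∀ i, i ≤ d / 2 →
      (Matrix.of fun (p : Fin (i + 1)) (q : Fin (d - i + 1)) =>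
        c (i + q.val - p.val)).TotallyNonneg := by
  set f : ℝ[X] := ∑ k ∈ Finset.range (d + 1), Polynomial.C (c k) * Polynomial.X ^ k with hf
  have hcoeff : ∀ n, f.coeff n = c n := by
    intro n
    rw [hf, Polynomial.finset_sum_coeff]
    simp only [Polynomial.coeff_C_mul, Polynomial.coeff_X_pow, mul_ite, mul_one, mul_zero]
    rw [Finset.sum_ite_eq (Finset.range (d + 1)) n (fun k => c k)]
    by_cases h : n ≤ d
    · rw [if_pos (Finset.mem_range.mpr (by omega))]
    · rw [if_neg (by simp [Finset.mem_range]; omega), hc n (by omega)]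
  have hroots : ∀ z ∈ f.roots, z ≤ 0 := by
    intro z hz
    by_contra h
    push_neg at h
    have hne : f ≠ 0 := by
      intro h0
      rw [h0, Polynomial.roots_zero] at hz
      exact absurd hz (Multiset.notMem_zero z)
    have hfz : f.eval z = 0 := (Polynomial.isRoot_of_mem_roots hz)
    have heval : f.eval z = ∑ k ∈ Finset.range (d + 1), c k * z ^ k := by
      rw [hf, Polynomial.eval_finset_sum]
      simp [Polynomial.eval_mul, Polynomial.eval_pow]
    rw [heval] at hfz
    have hall : ∀ k ∈ Finset.range (d + 1), c k * z ^ k = 0 :=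
      (Finset.sum_eq_zero_iff_of_nonneg fun k _ =>
        mul_nonneg (hnn k) (pow_nonneg h.le k)).mp hfz
    apply hne
    rw [hf]
    apply Finset.sum_eq_zero
    intro k hk
    have : c k = 0 := by
      have := hall k hk
      have hz' : z ^ k > 0 := pow_pos h k
      exact by nlinarith [this]
    rw [this, map_zero, zero_mul]
  have hTNP : TNP f := by
    have ha : 0 ≤ f.leadingCoeff := by
      rw [Polynomial.leadingCoeff, hcoeff]; exact hnn _
    have hfeq : f = C f.leadingCoeff *
        ((f.roots.map (fun z => -z)).map fun r => X + C r).prod := by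
      have h2 : (Multiset.map (fun r => X + C r) (Multiset.map (fun z => -z) f.roots))
          = Multiset.map (fun z => X - C z) f.roots := by
        rw [Multiset.map_map]
        apply Multiset.map_congr rfl
        intro z _
        simp [sub_eq_add_neg]
      rw [h2]
      exact (by simpa only [Polynomial.map_id] using hsplit : Polynomial.Splits f).eq_prod_roots
    rw [hfeq]
    exact prod_TNP _ ha _ (by
      intro r hr
      obtain ⟨z, hz, rfl⟩ := Multiset.mem_map.mp hr
      linarith [hroots z hz])
  intro i hi t r s hr hs
  have hk : StrictMono (fun p => ((r p : Fin (i + 1)) : ℕ)) := fun _ _ h => hr h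
  have hs' : StrictMono (fun q => ((i : ℤ) + ((s q : Fin (d - i + 1)) : ℕ))) := by
    intro a b h
    have := hs h
    have h2 : ((s a : Fin (d - i + 1)) : ℕ) < ((s b : Fin (d - i + 1)) : ℕ) := this
    dsimp only
    omega
  have hm : ((Matrix.of fun (p : Fin (i + 1)) (q : Fin (d - i + 1)) =>
        c (i + q.val - p.val)).submatrix r s)
      = Matrix.of fun p q => colFn f ((r p : Fin (i + 1)) : ℕ)
          ((i : ℤ) + ((s q : Fin (d - i + 1)) : ℕ)) := by
    ext p q
    have hple : ((r p : Fin (i + 1)) : ℕ) ≤ i := Nat.lt_succ_iff.mp (r p).isLt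
    simp only [Matrix.submatrix_apply, Matrix.of_apply, colFn, hcoeff]
    rw [if_pos (by omega)]
    congr 1
    omega
  rw [hm]
  exact hTNP t _ _ hk hs'
end

section
/- Let s ≥ 1 and let a_1, …, a_s, b_1, …, b_s be nonnegative real numbers. Then the ℕ × ℕ lower-triangular Toeplitz matrix W_s(a,b), whose (p,q) entry is Σ_{K ⊆ {1,…,s}, |K| = p−q} (Π_{k∈K} a_k)·(Π_{k∉K} b_k) (interpreted as 0 unless 0 ≤ p−q ≤ s), is totally nonnegative: for every t ≥ 0 and all strictly increasing indices i_0 < i_1 < ⋯ < i_t and j_0 < j_1 < ⋯ < j_t in ℕ, the determinant of the (t+1) × (t+1) submatrix ((W_s(a,b))_{i_r, j_{r'}})_{0 ≤ r, r' ≤ t} is nonnegative. -/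
/-- The weighted path matrix `W_s(a,b)`, indexed by `ℕ × ℕ`, whose `(p,q)` entry is
`Σ_{K ⊆ {1,…,s}, |K| = p−q} (Π_{k∈K} a_k)·(Π_{k∉K} b_k)` (zero unless `0 ≤ p−q ≤ s`). -/
noncomputable def weightedPathMatrix (s : ℕ) (a b : Fin s → ℝ) : ℕ → ℕ → ℝ :=
  fun p q =>
    ∑ K ∈ Finset.univ.filter (fun K : Finset (Fin s) => K.card + q = p),
      (∏ k ∈ K, a k) * (∏ k ∈ Kᶜ, b k)

open Polynomial Finset in
lemma wpm_eq_coeff (s : ℕ) (a b : Fin s → ℝ) (p q : ℕ) :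
    weightedPathMatrix s a b p q =
      if q ≤ p then (∏ k, (C (a k) * X + C (b k))).coeff (p - q) else 0 := by
  have hprod : (∏ k, (C (a k) * X + C (b k))) =
      ∑ K : Finset (Fin s), C ((∏ k ∈ K, a k) * (∏ k ∈ Kᶜ, b k)) * X ^ K.card := by
    rw [Finset.prod_add]
    rw [← Finset.powerset_univ]
    refine Finset.sum_congr rfl fun K _ => ?_
    rw [← Finset.compl_eq_univ_sdiff]
    rw [Finset.prod_mul_distrib, Finset.prod_const, map_mul, ← map_prod, ← map_prod]
    ring
  rw [hprod]
  unfold weightedPathMatrix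
  rw [Finset.sum_filter]
  split_ifs with hqp
  · rw [Polynomial.finset_sum_coeff]
    refine Finset.sum_congr rfl fun K _ => ?_
    rw [Polynomial.coeff_C_mul, Polynomial.coeff_X_pow]
    by_cases h : K.card + q = p
    · have : K.card = p - q := by omega
      simp [h, this, hqp, Nat.sub_add_cancel]
    · have h2 : ¬ p - q = K.card := by omega
      simp [h, h2]
  · refine Finset.sum_eq_zero fun K _ => ?_
    have : ¬ K.card + q = p := by omega
    simp [this]

lemma wpm_zero (a b : Fin 0 → ℝ) (p q : ℕ) :
    weightedPathMatrix 0 a b p q = if p = q then 1 else 0 := by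
  rw [wpm_eq_coeff]
  rcases Nat.lt_trichotomy p q with h | h | h
  · have h1 : ¬ q ≤ p := by omega
    have h2 : ¬ p = q := by omega
    simp [h1, h2]
  · simp [h]
  · have h1 : q ≤ p := by omega
    have h2 : ¬ p = q := by omega
    have h3 : ¬ p - q = 0 := by omega
    simp [h1, h2, h3, Polynomial.coeff_one]

open Polynomial in
lemma wpm_succ (s : ℕ) (a b : Fin (s+1) → ℝ) (p q : ℕ) :
    weightedPathMatrix (s+1) a b p q
      = b (Fin.last s) * weightedPathMatrix s (a ∘ Fin.castSucc) (b ∘ Fin.castSucc) p q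
      + a (Fin.last s) * weightedPathMatrix s (a ∘ Fin.castSucc) (b ∘ Fin.castSucc) p (q+1) := by
  rw [wpm_eq_coeff, wpm_eq_coeff, wpm_eq_coeff]
  rw [Fin.prod_univ_castSucc]
  simp only [Function.comp]
  set P : ℝ[X] := ∏ k : Fin s, (C (a k.castSucc) * X + C (b k.castSucc)) with hP
  have hsplit : P * (C (a (Fin.last s)) * X + C (b (Fin.last s)))
      = (P * C (a (Fin.last s))) * X + P * C (b (Fin.last s)) := by ring
  have hc0 : (P * (C (a (Fin.last s)) * X + C (b (Fin.last s)))).coeff 0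
      = b (Fin.last s) * P.coeff 0 := by
    rw [hsplit, Polynomial.coeff_add, Polynomial.coeff_mul_X_zero, Polynomial.coeff_mul_C]
    ring
  have hc : ∀ n, (P * (C (a (Fin.last s)) * X + C (b (Fin.last s)))).coeff (n+1)
      = b (Fin.last s) * P.coeff (n+1) + a (Fin.last s) * P.coeff n := by
    intro n
    rw [hsplit, Polynomial.coeff_add, Polynomial.coeff_mul_X, Polynomial.coeff_mul_C,
      Polynomial.coeff_mul_C]
    ring
  rcases Nat.lt_trichotomy p q with h | h | h
  · have h1 : ¬ q ≤ p := by omega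
    have h2 : ¬ q + 1 ≤ p := by omega
    simp [h1, h2]
  · have h1 : q ≤ p := by omega
    have h2 : ¬ q + 1 ≤ p := by omega
    have h3 : p - q = 0 := by omega
    rw [if_pos h1, if_pos h1, if_neg h2, h3, hc0]
    ring
  · have h1 : q ≤ p := by omega
    have h2 : q + 1 ≤ p := by omega
    have h3 : p - q = (p - (q+1)) + 1 := by omega
    rw [if_pos h1, if_pos h1, if_pos h2, h3, hc]

lemma det_ite_nonneg {t : ℕ} (row col : Fin (t+1) → ℕ)
    (hrow : StrictMono row) (hcol : StrictMono col) :
    0 ≤ (Matrix.of fun r r' : Fin (t+1) => if row r = col r' then (1:ℝ) else 0).det := by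
  classical
  by_cases h : ∀ r, row r = col r
  · have : (Matrix.of fun r r' : Fin (t+1) => if row r = col r' then (1:ℝ) else 0) = 1 := by
      ext r r'
      by_cases hr : r = r'
      · simp [hr, h r', Matrix.one_apply]
      · have hne : row r ≠ col r' := by
          rcases lt_or_gt_of_ne (show r ≠ r' from hr) with hlt | hlt
          · have := hcol hlt
            rw [← h r] at this
            omega
          · have := hcol hlt
            rw [← h r] at this
            omega
        simp [hne, Matrix.one_apply, hr]
    rw [this, Matrix.det_one]
    norm_num
  · push_neg at h
    set F := Finset.univ.filter (fun r => row r ≠ col r) with hF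
    have hne : F.Nonempty := by
      obtain ⟨r, hr⟩ := h
      exact ⟨r, by simp [hF, hr]⟩
    set r0 := F.min' hne with hr0
    have hr0mem : row r0 ≠ col r0 := by
      have := F.min'_mem hne
      simp [hF] at this
      exact this
    have hbelow : ∀ r : Fin (t+1), r < r0 → row r = col r := by
      intro r hr
      by_contra hcon
      have : r0 ≤ r := F.min'_le r (by simp [hF, hcon])
      omega
    rcases lt_or_gt_of_ne hr0mem with hlt | hlt
    · -- row r0 < col r0 : zero row r0
      have : (Matrix.of fun r r' : Fin (t+1) => if row r = col r' then (1:ℝ) else 0).det = 0 := by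
        apply Matrix.det_eq_zero_of_row_eq_zero r0
        intro r'
        have : row r0 ≠ col r' := by
          rcases lt_or_ge r' r0 with h1 | h1
          · have h2 := hbelow r' h1
            have h3 := hrow h1
            omega
          · have h3 : col r0 ≤ col r' := hcol.monotone h1
            omega
        simp [this]
      rw [this]
    · -- col r0 < row r0 : zero column r0
      have : (Matrix.of fun r r' : Fin (t+1) => if row r = col r' then (1:ℝ) else 0).det = 0 := by
        apply Matrix.det_eq_zero_of_column_eq_zero r0
        intro r
        have : row r ≠ col r0 := by
          rcases lt_or_ge r r0 with h1 | h1
          · have h2 := hbelow r h1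
            have h3 := hcol h1
            omega
          · have h3 : row r0 ≤ row r := hrow.monotone h1
            omega
        simp [this]
      rw [this]

lemma wpm_tnn : ∀ (s : ℕ) (a b : Fin s → ℝ), (∀ k, 0 ≤ a k) → (∀ k, 0 ≤ b k) →
    ∀ (t : ℕ) (row col : Fin (t + 1) → ℕ), StrictMono row → StrictMono col →
      0 ≤ (Matrix.of fun r r' : Fin (t + 1) =>
        weightedPathMatrix s a b (row r) (col r')).det := by
  intro s
  induction s with
  | zero =>
    intro a b ha hb t row col hrow hcol
    have : (Matrix.of fun r r' : Fin (t + 1) => weightedPathMatrix 0 a b (row r) (col r'))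
        = Matrix.of fun r r' : Fin (t+1) => if row r = col r' then (1:ℝ) else 0 := by
      ext r r'
      simp [wpm_zero]
    rw [this]
    exact det_ite_nonneg row col hrow hcol
  | succ s ih =>
    intro a b ha hb t row col hrow hcol
    classical
    set a' : Fin s → ℝ := a ∘ Fin.castSucc with ha'
    set b' : Fin s → ℝ := b ∘ Fin.castSucc with hb'
    set W : ℕ → ℕ → ℝ := weightedPathMatrix s a' b' with hW
    set u : ℕ → (Fin (t+1) → ℝ) := fun c r => W (row r) c with hu
    set f := (Matrix.detRowAlternating : (Fin (t+1) → ℝ) [⋀^Fin (t+1)]→ₗ[ℝ] ℝ) with hf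
    set g : Fin (t+1) → Bool → (Fin (t+1) → ℝ) := fun r' e =>
      if e then a (Fin.last s) • u (col r' + 1) else b (Fin.last s) • u (col r') with hg
    -- rewrite the determinant as f of the columns
    have hdet : (Matrix.of fun r r' : Fin (t + 1) =>
        weightedPathMatrix (s+1) a b (row r) (col r')).det
        = f.toMultilinearMap (fun r' => ∑ e : Bool, g r' e) := by
      rw [← Matrix.det_transpose]
      show _ = f (fun r' => ∑ e : Bool, g r' e)
      congr 1
      ext r' r
      simp only [Matrix.transpose_apply, Matrix.of_apply, Fintype.sum_bool, if_true, if_false, hg]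
      rw [wpm_succ]
      simp [hu, hW, ha', hb', Pi.add_apply, Pi.smul_apply]
      ring
    rw [hdet, f.toMultilinearMap.map_sum g]
    apply Finset.sum_nonneg
    intro χ _
    -- the coefficient and column-index selections
    set w : Fin (t+1) → ℝ := fun r' => if χ r' then a (Fin.last s) else b (Fin.last s) with hw
    set c : Fin (t+1) → ℕ := fun r' => if χ r' then col r' + 1 else col r' with hc
    have hterm : (f.toMultilinearMap fun r' => g r' (χ r'))
        = (∏ r', w r') • f.toMultilinearMap (fun r' => u (c r')) := by
      rw [← MultilinearMap.map_smul_univ]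
      congr 1
      ext r'
      by_cases h : χ r' <;> simp [h, hw, hc, hg]
    rw [hterm]
    have hwnn : 0 ≤ ∏ r', w r' := by
      apply Finset.prod_nonneg
      intro r' _
      by_cases h : χ r' <;> simp [h, hw, ha _, hb _]
    have hcmono : Monotone c := by
      intro r1 r2 h12
      rcases eq_or_lt_of_le h12 with h | h
      · subst h; exact le_refl _
      · have h1 : c r1 ≤ col r1 + 1 := by by_cases hh : χ r1 <;> simp [hc, hh]
        have h2 : col r2 ≤ c r2 := by by_cases hh : χ r2 <;> simp [hc, hh]
        have h3 : col r1 < col r2 := hcol h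
        omega
    by_cases hinj : Function.Injective c
    · have hcsm : StrictMono c := hcmono.strictMono_of_injective hinj
      have := ih a' b' (fun k => ha _) (fun k => hb _) t row c hrow hcsm
      have heq : f.toMultilinearMap (fun r' => u (c r'))
          = (Matrix.of fun r r' : Fin (t + 1) => weightedPathMatrix s a' b' (row r) (c r')).det := by
        rw [← Matrix.det_transpose]
        rfl
      rw [heq]
      positivity
    · obtain ⟨r1, r2, h12, hne⟩ : ∃ r1 r2, c r1 = c r2 ∧ r1 ≠ r2 := by
        simp only [Function.Injective, not_forall] at hinj
        obtain ⟨r1, r2, h12, hne⟩ := hinj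
        exact ⟨r1, r2, h12, hne⟩
      have : f.toMultilinearMap (fun r' => u (c r')) = 0 := by
        have := f.map_eq_zero_of_eq (fun r' => u (c r')) (by rw [h12] : u (c r1) = u (c r2)) hne
        exact this
      rw [this, smul_zero]

/-- For `s ≥ 1` and nonnegative reals `a₁, …, a_s, b₁, …, b_s`, the
`ℕ × ℕ` lower-triangular Toeplitz weighted path matrix `W_s(a,b)` is totally nonnegative:
every finite square submatrix taken on strictly increasing row and column indices has
nonnegative determinant. -/
theorem weightedPathMatrix_totallyNonneg
    (s : ℕ) (hs : 1 ≤ s) (a b : Fin s → ℝ)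
    (ha : ∀ k, 0 ≤ a k) (hb : ∀ k, 0 ≤ b k) :
    ∀ (t : ℕ) (row col : Fin (t + 1) → ℕ),
      StrictMono row → StrictMono col →
      0 ≤ (Matrix.of fun r r' : Fin (t + 1) =>
        weightedPathMatrix s a b (row r) (col r')).det := by
  exact wpm_tnn s a b ha hb
end
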